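/- For all integers ℓ ≥ 2, r̃(K_{1,3}, P_ℓ) ≥ ⌊3ℓ/2⌋: Painter has a strategy preventing both a red K_{1,3} and a blue path on ℓ vertices for the first ⌊3ℓ/2⌋ − 1 rounds of the online Ramsey game. -/

import Mathlib

open SimpleGraph

/-- A history of the online Ramsey game: a list of moves, each an edge together
with its color (`true` = red, `false` = blue). The most recent move comes first. -/
abbrev History := List (Sym2 ℕ × Bool)

/-- The simple graph on `ℕ` formed by the edges of the history `h` having color `col`. -/
def histGraph (h : History) (col : Bool) : SimpleGraph ℕ where
  Adj u v := u ≠ v ∧ (s(u, v), col) ∈ h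
  symm := ⟨fun u v hadj => ⟨hadj.1.symm, by rw [Sym2.eq_swap]; exact hadj.2⟩⟩
  loopless := ⟨fun u hadj => hadj.1 rfl⟩

/-- The subgraph of `G` consisting of its edges of color `col` under the coloring `c`. -/
def colorSub {V : Type*} (G : SimpleGraph V) (c : Sym2 V → Bool) (col : Bool) :
    SimpleGraph V where
  Adj u v := G.Adj u v ∧ c s(u, v) = col
  symm := ⟨fun u v hadj => ⟨hadj.1.symm, by rw [Sym2.eq_swap]; exact hadj.2⟩⟩
  loopless := ⟨fun u hadj => G.irrefl hadj.1⟩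

/-- `G` has a copy in `H` (an injective graph homomorphism). -/
def HasCopy {α β : Type*} (G : SimpleGraph α) (H : SimpleGraph β) : Prop :=
  ∃ f : α → β, Function.Injective f ∧ ∀ a b, G.Adj a b → H.Adj (f a) (f b)

/-- A Builder strategy chooses the next edge from the current history. -/
abbrev BuilderStrategy := History → Sym2 ℕ

/-- A Painter strategy colors the edge just drawn, given the current history. -/
abbrev PainterStrategy := History → Sym2 ℕ → Bool

/-- A Builder strategy is valid if it always draws a non-loop edge that has
not been drawn before. -/
def ValidStrategy (B : BuilderStrategy) : Prop :=
  ∀ h : History, ¬ (B h).IsDiag ∧ ∀ c : Bool, (B h, c) ∉ h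

/-- The history after `n` further rounds of play, starting from history `h0`,
with Builder playing `B` and Painter playing `P`. -/
def playFrom (h0 : History) (B : BuilderStrategy) (P : PainterStrategy) : ℕ → History
  | 0 => h0
  | n + 1 =>
      let h := playFrom h0 B P n
      (B h, P h (B h)) :: h

/-- The history after `n` rounds of play from scratch. -/
def play (B : BuilderStrategy) (P : PainterStrategy) (n : ℕ) : History :=
  playFrom [] B P n

/-- Builder can force a red copy of `G` or a blue copy of `H` within `n` rounds. -/
def BuilderWins {α β : Type*} (G : SimpleGraph α) (H : SimpleGraph β) (n : ℕ) : Prop :=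
  ∃ B : BuilderStrategy, ValidStrategy B ∧ ∀ P : PainterStrategy,
    HasCopy G (histGraph (play B P n) true) ∨ HasCopy H (histGraph (play B P n) false)

/-- The online Ramsey number of `G` versus `H`. -/
noncomputable def onlineRamsey {α β : Type*} (G : SimpleGraph α) (H : SimpleGraph β) : ℕ :=
  sInf {n | BuilderWins G H n}

/-- The star `K_{1,3}` with three edges. -/
abbrev K13 : SimpleGraph (Fin 1 ⊕ Fin 3) := completeBipartiteGraph (Fin 1) (Fin 3)

lemma histGraph_adj {h : History} {col : Bool} {u v : ℕ} :
    (histGraph h col).Adj u v ↔ u ≠ v ∧ (s(u, v), col) ∈ h := Iff.rfl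

namespace ORLower
open List

/-! ### Red edge lists -/

def redList (h : History) : List (Sym2 ℕ) := (h.filter (fun x => x.2)).map Prod.fst

lemma mem_redList {h : History} {e : Sym2 ℕ} : e ∈ redList h ↔ (e, true) ∈ h := by
  constructor
  · intro he
    simp only [redList, List.mem_map, List.mem_filter] at he
    obtain ⟨⟨e', b⟩, ⟨hmem, hb⟩, rfl⟩ := he
    simp only at hb
    rw [hb] at hmem; exact hmem
  · intro he
    simp only [redList, List.mem_map, List.mem_filter]
    exact ⟨(e, true), ⟨he, rfl⟩, rfl⟩

@[simp] lemma redList_cons_true (e : Sym2 ℕ) (h : History) :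
    redList ((e, true) :: h) = e :: redList h := by simp [redList]

@[simp] lemma redList_cons_false (e : Sym2 ℕ) (h : History) :
    redList ((e, false) :: h) = redList h := by simp [redList]

lemma redList_append (t h : History) : redList (t ++ h) = redList t ++ redList h := by
  simp [redList]

def adjR (h : History) (u v : ℕ) : Prop := u ≠ v ∧ s(u, v) ∈ redList h

lemma adjR_mono {t h : History} {u v : ℕ} (ha : adjR h u v) : adjR (t ++ h) u v :=
  ⟨ha.1, by rw [redList_append]; exact List.mem_append_right _ ha.2⟩

noncomputable def degR (h : History) (v : ℕ) : ℕ :=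
  (redList h).countP (fun e => decide (v ∈ e))

lemma degR_mono (t h : History) (v : ℕ) : degR h v ≤ degR (t ++ h) v := by
  unfold degR
  rw [redList_append, List.countP_append]
  omega

/-- There is a red walk from `u` to `v` with at least one edge and
at most `m - 1` edges (i.e. at most `m` vertices). -/
def Link (h : History) (m : ℕ) (u v : ℕ) : Prop :=
  ∃ wk : List ℕ, wk.Chain' (adjR h) ∧ wk.head? = some u ∧ wk.getLast? = some v ∧
    2 ≤ wk.length ∧ wk.length ≤ m

lemma Link_mono {t h : History} {m u v : ℕ} (hl : Link h m u v) : Link (t ++ h) m u v := by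
  obtain ⟨wk, hc, h1, h2, h3, h4⟩ := hl
  exact ⟨wk, List.IsChain.imp (fun a b hab => adjR_mono hab) hc, h1, h2, h3, h4⟩

def Safe (L : ℕ) (h : History) (u v : ℕ) : Prop :=
  degR h u ≤ 1 ∧ degR h v ≤ 1 ∧ ¬ Link h L u v ∧ ¬ Link h L v u

lemma Safe.symm {L : ℕ} {h : History} {u v : ℕ} (hs : Safe L h u v) : Safe L h v u :=
  ⟨hs.2.1, hs.1, hs.2.2.2, hs.2.2.1⟩

open Classical in
noncomputable def painter (L : ℕ) : PainterStrategy := fun h e =>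
  if (∀ a b, e = s(a, b) → Safe L h a b) then true else false

lemma painter_true_iff {L : ℕ} {h : History} {u v : ℕ} :
    painter L h s(u, v) = true ↔ Safe L h u v := by
  unfold painter
  split
  · next hall => simpa using hall u v rfl
  · next hnall =>
    simp only [Bool.false_eq_true, false_iff]
    intro hs
    apply hnall
    intro a b hab
    rw [Sym2.eq_iff] at hab
    rcases hab with ⟨rfl, rfl⟩ | ⟨rfl, rfl⟩
    · exact hs
    · exact hs.symm

lemma painter_false {L : ℕ} {h : History} {u v : ℕ}
    (hp : painter L h s(u, v) = false) : ¬ Safe L h u v := by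
  intro hs
  rw [(painter_true_iff).mpr hs] at hp
  exact Bool.true_eq_false.mp hp

/-! ### play lemmas -/

lemma play_succ (B : BuilderStrategy) (P : PainterStrategy) (n : ℕ) :
    play B P (n + 1) = (B (play B P n), P (play B P n) (B (play B P n))) :: play B P n := rfl

lemma play_length (B : BuilderStrategy) (P : PainterStrategy) (n : ℕ) :
    (play B P n).length = n := by
  induction n with
  | zero => rfl
  | succ n ih => rw [play_succ]; simp [ih]

lemma play_prefix (B : BuilderStrategy) (P : PainterStrategy) {m n : ℕ} (h : m ≤ n) :
    ∃ t, play B P n = t ++ play B P m := by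
  induction n, h using Nat.le_induction with
  | base => exact ⟨[], rfl⟩
  | succ n hmn ih =>
    obtain ⟨t, ht⟩ := ih
    exact ⟨(B (play B P n), P (play B P n) (B (play B P n))) :: t, by rw [play_succ, ht]; rfl⟩

lemma mem_play {B : BuilderStrategy} {P : PainterStrategy} {n : ℕ} {x : Sym2 ℕ × Bool}
    (hx : x ∈ play B P n) :
    ∃ m, m < n ∧ x = (B (play B P m), P (play B P m) (B (play B P m))) := by
  induction n with
  | zero => simp [play, playFrom] at hx
  | succ n ih =>
    rw [play_succ] at hx
    rcases List.mem_cons.mp hx with h | h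
    · exact ⟨n, Nat.lt_succ_self n, h⟩
    · obtain ⟨m, hm, hx⟩ := ih h
      exact ⟨m, Nat.lt_succ_of_lt hm, hx⟩

/-! ### edges of a path (list of vertices) -/

def edgesP : List ℕ → List (Sym2 ℕ)
  | [] => []
  | [_] => []
  | a :: b :: t => s(a, b) :: edgesP (b :: t)

@[simp] lemma edgesP_nil : edgesP [] = [] := rfl
@[simp] lemma edgesP_single (a : ℕ) : edgesP [a] = [] := rfl
@[simp] lemma edgesP_cons₂ (a b : ℕ) (t : List ℕ) :
    edgesP (a :: b :: t) = s(a, b) :: edgesP (b :: t) := rfl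

lemma length_edgesP (l : List ℕ) : (edgesP l).length = l.length - 1 := by
  induction l using edgesP.induct with
  | case1 => rfl
  | case2 a => rfl
  | case3 a b t ih => simp [ih]

lemma verts_of_mem_edgesP {l : List ℕ} {e : Sym2 ℕ} (he : e ∈ edgesP l) {x : ℕ}
    (hx : x ∈ e) : x ∈ l := by
  induction l using edgesP.induct with
  | case1 => simp at he
  | case2 a => simp at he
  | case3 a b t ih =>
    rw [edgesP_cons₂, List.mem_cons] at he
    rcases he with rfl | he
    · rcases Sym2.mem_iff.mp hx with rfl | rfl
      · exact List.mem_cons_self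
      · exact List.mem_cons_of_mem _ (List.mem_cons_self)
    · exact List.mem_cons_of_mem _ (ih he)

lemma countP_edgesP_eq_zero {l : List ℕ} {v : ℕ} (hv : v ∉ l) :
    (edgesP l).countP (fun e => decide (v ∈ e)) = 0 := by
  rw [List.countP_eq_zero]
  intro e he
  simp only [decide_eq_true_eq]
  intro hmem
  exact hv (verts_of_mem_edgesP he hmem)

lemma countP_edgesP_head {a : ℕ} {t : List ℕ} (h : a ∉ t) :
    (edgesP (a :: t)).countP (fun e => decide (a ∈ e)) ≤ 1 := by
  match t with
  | [] => simp
  | b :: t' =>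
    have h0 : (edgesP (b :: t')).countP (fun e => decide (a ∈ e)) = 0 :=
      countP_edgesP_eq_zero h
    rw [edgesP_cons₂, List.countP_cons, h0]
    split <;> omega

lemma countP_edgesP_last {l : List ℕ} {v : ℕ} (hn : l.Nodup) (hl : l.getLast? = some v) :
    (edgesP l).countP (fun e => decide (v ∈ e)) ≤ 1 := by
  induction l using edgesP.induct with
  | case1 => simp
  | case2 a => simp
  | case3 a b t ih =>
    rw [List.getLast?_cons_cons] at hl
    have hvbt : v ∈ b :: t := List.mem_of_mem_getLast? hl
    have hva : v ≠ a := by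
      rintro rfl
      exact (List.nodup_cons.mp hn).1 hvbt
    have ih' := ih (List.nodup_cons.mp hn).2 hl
    by_cases hvb : v = b
    · subst hvb
      match t with
      | [] => simp [Sym2.mem_iff, hva]
      | c :: t' =>
        exfalso
        rw [List.getLast?_cons_cons] at hl
        have : v ∈ c :: t' := List.mem_of_mem_getLast? hl
        exact ((List.nodup_cons.mp (List.nodup_cons.mp hn).2).1) this
    · have hz : (decide (v ∈ s(a, b)) : Bool) = false := by
        simp only [decide_eq_false_iff_not, Sym2.mem_iff]
        rintro (rfl | rfl)
        · exact hva rfl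
        · exact hvb rfl
      rw [edgesP_cons₂, List.countP_cons, hz]
      simpa using ih'

lemma countP_edgesP_le_two {l : List ℕ} {v : ℕ} (hn : l.Nodup) :
    (edgesP l).countP (fun e => decide (v ∈ e)) ≤ 2 := by
  induction l using edgesP.induct with
  | case1 => simp
  | case2 a => simp
  | case3 a b t ih =>
    by_cases hva : v = a
    · subst hva
      have h0 : (edgesP (b :: t)).countP (fun e => decide (v ∈ e)) = 0 :=
        countP_edgesP_eq_zero (List.nodup_cons.mp hn).1
      rw [edgesP_cons₂, List.countP_cons, h0]
      split <;> omega
    · by_cases hvb : v = b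
      · subst hvb
        have h1 : (edgesP (v :: t)).countP (fun e => decide (v ∈ e)) ≤ 1 :=
          countP_edgesP_head (List.nodup_cons.mp (List.nodup_cons.mp hn).2).1
        rw [edgesP_cons₂, List.countP_cons]
        split <;> omega
      · have hz : (decide (v ∈ s(a, b)) : Bool) = false := by
          simp only [decide_eq_false_iff_not, Sym2.mem_iff]
          rintro (rfl | rfl)
          · exact hva rfl
          · exact hvb rfl
        rw [edgesP_cons₂, List.countP_cons, hz]
        have := ih (List.nodup_cons.mp hn).2
        simp only [Bool.false_eq_true, if_false]
        omega

lemma two_le_countP_edgesP {l : List ℕ} {v : ℕ} (hn : l.Nodup) (hv : v ∈ l)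
    (hh : l.head? ≠ some v) (hl : l.getLast? ≠ some v) :
    2 ≤ (edgesP l).countP (fun e => decide (v ∈ e)) := by
  induction l using edgesP.induct with
  | case1 => simp at hv
  | case2 a =>
    exfalso; apply hh
    rcases List.mem_singleton.mp hv with rfl
    rfl
  | case3 a b t ih =>
    have hva : v ≠ a := by rintro rfl; exact hh rfl
    rw [List.getLast?_cons_cons] at hl
    by_cases hvb : v = b
    · subst hvb
      match t with
      | [] => exact absurd rfl hl
      | c :: t' =>
        have h2 : 1 ≤ (edgesP (v :: c :: t')).countP (fun e => decide (v ∈ e)) := by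
          rw [edgesP_cons₂, List.countP_cons_of_pos (p := fun e => decide (v ∈ e)) (a := s(v, c)) (by simp)]
          omega
        rw [edgesP_cons₂, List.countP_cons_of_pos (p := fun e => decide (v ∈ e)) (a := s(a, v)) (by simp)]
        omega
    · have hvbt : v ∈ b :: t := by
        rcases List.mem_cons.mp hv with rfl | h
        · exact absurd rfl hva
        · exact h
      have ihh := ih (List.nodup_cons.mp hn).2 hvbt
        (by simp only [List.head?_cons, ne_eq, Option.some.injEq]
            exact fun hc => hvb hc.symm) hl
      rw [edgesP_cons₂, List.countP_cons]
      omega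

lemma internal_of_two_le {l : List ℕ} {v : ℕ} (hn : l.Nodup)
    (h2 : 2 ≤ (edgesP l).countP (fun e => decide (v ∈ e))) :
    v ∈ l ∧ l.head? ≠ some v ∧ l.getLast? ≠ some v := by
  refine ⟨?_, ?_, ?_⟩
  · by_contra hv
    rw [countP_edgesP_eq_zero hv] at h2
    omega
  · intro hh
    match l, hh with
    | a :: t, hh =>
      have : a = v := by simpa using hh
      subst this
      have := countP_edgesP_head (t := t) (List.nodup_cons.mp hn).1
      omega
  · intro hl
    have := countP_edgesP_last hn hl
    omega

lemma mem_edgesP_iff {l : List ℕ} {e : Sym2 ℕ} :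
    e ∈ edgesP l ↔ ∃ i : ℕ, ∃ h : i + 1 < l.length,
      e = s(l[i]'(by omega), l[i + 1]'h) := by
  induction l using edgesP.induct with
  | case1 => simp
  | case2 a => simp
  | case3 a b t ih =>
    rw [edgesP_cons₂, List.mem_cons, ih]
    constructor
    · rintro (rfl | ⟨i, hi, rfl⟩)
      · exact ⟨0, by simp [Nat.succ_lt_succ], rfl⟩
      · exact ⟨i + 1, by simpa using Nat.succ_lt_succ hi, rfl⟩
    · rintro ⟨i, hi, rfl⟩
      match i with
      | 0 => exact Or.inl rfl
      | i + 1 =>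
        right
        exact ⟨i, by simpa using Nat.lt_of_succ_lt_succ hi, rfl⟩

lemma edgesP_append {l1 l2 : List ℕ} {u v : ℕ} (h1 : l1.getLast? = some u)
    (h2 : l2.head? = some v) :
    edgesP (l1 ++ l2) = edgesP l1 ++ s(u, v) :: edgesP l2 := by
  induction l1 using edgesP.induct with
  | case1 => simp at h1
  | case2 a =>
    have ha : a = u := by simpa using h1
    subst ha
    match l2, h2 with
    | b :: t, h2 =>
      have hb : b = v := by simpa using h2
      subst hb
      simp
  | case3 a b t ih =>
    rw [List.getLast?_cons_cons] at h1
    have := ih h1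
    simp only [List.cons_append, edgesP_cons₂] at *
    rw [this]

lemma edgesP_reverse (l : List ℕ) : (edgesP l.reverse).Perm (edgesP l) := by
  induction l using edgesP.induct with
  | case1 => simp
  | case2 a => simp
  | case3 a b t ih =>
    have hrev : (a :: b :: t).reverse = (b :: t).reverse ++ [a] := by simp
    rw [hrev]
    have hlast : ((b :: t).reverse).getLast? = some b := by
      rw [List.getLast?_reverse]; rfl
    rw [edgesP_append hlast (by rfl)]
    simp only [edgesP_single]
    calc edgesP (b :: t).reverse ++ [s(b, a)]
        ~ s(b, a) :: edgesP (b :: t).reverse := List.perm_append_singleton _ _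
      _ ~ s(b, a) :: edgesP (b :: t) := (ih).cons _
      _ = s(a, b) :: edgesP (b :: t) := by rw [Sym2.eq_swap]

lemma chain'_of_edgesP {l : List ℕ} {R : List (Sym2 ℕ)} (hn : l.Nodup)
    (hR : ∀ e ∈ edgesP l, e ∈ R) :
    l.Chain' (fun a b => a ≠ b ∧ s(a, b) ∈ R) := by
  induction l using edgesP.induct with
  | case1 => simp [List.Chain']
  | case2 a => simp [List.Chain']
  | case3 a b t ih =>
    rw [List.Chain', List.isChain_cons_cons]
    refine ⟨⟨?_, hR _ (by simp)⟩, ih (List.nodup_cons.mp hn).2 ?_⟩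
    · rintro rfl
      exact (List.nodup_cons.mp hn).1 (List.mem_cons_self)
    · intro e he
      exact hR e (by rw [edgesP_cons₂]; exact List.mem_cons_of_mem _ he)

end ORLower
namespace ORLower
open List

/-! ### Components -/

inductive Comp where
  | path (l : List ℕ)
  | cyc (l : List ℕ)
deriving DecidableEq

def Comp.verts : Comp → List ℕ
  | .path l => l
  | .cyc l => l

def Comp.edges : Comp → List (Sym2 ℕ)
  | .path l => edgesP l
  | .cyc l => edgesP l ++ [s(l.getLastI, l.headI)]

def Comp.WF (L : ℕ) : Comp → Prop
  | .path l => l.Nodup ∧ 2 ≤ l.length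
  | .cyc l => l.Nodup ∧ 3 ≤ l.length ∧ L + 1 ≤ l.length

def Dj (c d : Comp) : Prop := ∀ x ∈ c.verts, x ∉ d.verts

lemma Dj_symm {c d : Comp} (h : Dj c d) : Dj d c := fun x hxd hxc => h x hxc hxd

def edgesAll (S : List Comp) : List (Sym2 ℕ) := (S.map Comp.edges).flatten

@[simp] lemma edgesAll_nil : edgesAll [] = [] := rfl
@[simp] lemma edgesAll_cons (c : Comp) (S : List Comp) :
    edgesAll (c :: S) = c.edges ++ edgesAll S := rfl

lemma mem_edgesAll {S : List Comp} {e : Sym2 ℕ} :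
    e ∈ edgesAll S ↔ ∃ c ∈ S, e ∈ c.edges := by
  simp [edgesAll]

def StInv (L : ℕ) (h : History) (S : List Comp) : Prop :=
  (redList h).Perm (edgesAll S) ∧ (∀ c ∈ S, c.WF L) ∧ S.Pairwise Dj

lemma head?_headI {l : List ℕ} (h : l ≠ []) : l.head? = some l.headI := by
  cases l with
  | nil => simp at h
  | cons a t => rfl

lemma getLast?_getLastI {l : List ℕ} (h : l ≠ []) : l.getLast? = some l.getLastI := by
  simp [List.getLastI_eq_getLast?, List.getLast?_eq_getLast h]

lemma headI_mem {l : List ℕ} (h : l ≠ []) : l.headI ∈ l :=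
  List.mem_of_mem_head? (show l.headI ∈ l.head? by rw [head?_headI h]; rfl)

lemma getLastI_mem {l : List ℕ} (h : l ≠ []) : l.getLastI ∈ l :=
  List.mem_of_mem_getLast? (show l.getLastI ∈ l.getLast? by rw [getLast?_getLastI h]; rfl)

lemma verts_ne_nil {L : ℕ} {c : Comp} (h : c.WF L) : c.verts ≠ [] := by
  cases c with
  | path l => intro hl; rw [Comp.verts] at hl; subst hl; simpa using h.2
  | cyc l => intro hl; rw [Comp.verts] at hl; subst hl; simpa using h.2.1

lemma verts_of_mem_edges {L : ℕ} {c : Comp} (hwf : c.WF L) {e : Sym2 ℕ} (he : e ∈ c.edges)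
    {x : ℕ} (hx : x ∈ e) : x ∈ c.verts := by
  cases c with
  | path l => exact verts_of_mem_edgesP he hx
  | cyc l =>
    rw [Comp.edges, List.mem_append] at he
    rcases he with he | he
    · exact verts_of_mem_edgesP he hx
    · have hl : l ≠ [] := by intro h; subst h; simpa using hwf.2.1
      rw [List.mem_singleton] at he
      subst he
      rcases Sym2.mem_iff.mp hx with rfl | rfl
      · exact getLastI_mem hl
      · exact headI_mem hl

lemma countP_edges_eq_zero {L : ℕ} {c : Comp} (hwf : c.WF L) {v : ℕ} (hv : v ∉ c.verts) :
    c.edges.countP (fun e => decide (v ∈ e)) = 0 := by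
  rw [List.countP_eq_zero]
  intro e he
  simp only [decide_eq_true_eq]
  intro hmem
  exact hv (verts_of_mem_edges hwf he hmem)

lemma headI_ne_getLastI {l : List ℕ} (hn : l.Nodup) (h2 : 2 ≤ l.length) :
    l.headI ≠ l.getLastI := by
  match l, h2 with
  | a :: b :: t, _ =>
    have hl : (b :: t) ≠ [] := by simp
    have h1 : (a :: b :: t).headI = a := rfl
    have h2 : (a :: b :: t).getLastI = (b :: t).getLast hl := by
      have := getLast?_getLastI (l := a :: b :: t) (by simp)
      rw [List.getLast?_cons_cons, List.getLast?_eq_getLast hl] at this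
      exact (Option.some_injective _ this.symm)
    rw [h1, h2]
    intro hc
    apply (List.nodup_cons.mp hn).1
    rw [hc]
    exact List.getLast_mem hl

/-- the last vertex of a list with ≥ 2 elements lies on some edge of it -/
lemma exists_edge_last {l : List ℕ} {v : ℕ} (h2 : 2 ≤ l.length) (hl : l.getLast? = some v) :
    ∃ e ∈ edgesP l, v ∈ e := by
  induction l using edgesP.induct with
  | case1 => simp at h2
  | case2 a => simp at h2
  | case3 a b t ih =>
    rw [List.getLast?_cons_cons] at hl
    match t with
    | [] =>
      have : b = v := by simpa using hl
      subst this
      exact ⟨s(a, b), by simp, by simp⟩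
    | c :: t' =>
      obtain ⟨e, he, hve⟩ := ih (by simp) hl
      exact ⟨e, by rw [edgesP_cons₂]; exact List.mem_cons_of_mem _ he, hve⟩

lemma exists_edge_head {l : List ℕ} {v : ℕ} (h2 : 2 ≤ l.length) (hl : l.head? = some v) :
    ∃ e ∈ edgesP l, v ∈ e := by
  match l, h2 with
  | a :: b :: t, _ =>
    have : a = v := by simpa using hl
    subst this
    exact ⟨s(a, b), by simp, by simp⟩

lemma countP_singleton_le_one (e : Sym2 ℕ) (p : Sym2 ℕ → Bool) :
    ([e] : List (Sym2 ℕ)).countP p ≤ 1 :=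
  le_trans (List.countP_le_length) (by simp)

lemma countP_cyc_le_two {L : ℕ} {l : List ℕ} (hwf : (Comp.cyc l).WF L) (v : ℕ) :
    (Comp.cyc l).edges.countP (fun e => decide (v ∈ e)) ≤ 2 := by
  obtain ⟨hn, h3, hLl⟩ := hwf
  have hl : l ≠ [] := by intro h; subst h; simp at h3
  rw [Comp.edges, List.countP_append]
  by_cases hv : v ∈ l
  · have hone := countP_singleton_le_one (s(l.getLastI, l.headI)) (fun e => decide (v ∈ e))
    by_cases hh : l.head? = some v
    · have h1 : (edgesP l).countP (fun e => decide (v ∈ e)) ≤ 1 := by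
        match l, hh with
        | a :: t, hh =>
          have : a = v := by simpa using hh
          subst this
          exact countP_edgesP_head (List.nodup_cons.mp hn).1
      omega
    · by_cases hla : l.getLast? = some v
      · have h1 := countP_edgesP_last hn hla
        omega
      · have h1 := countP_edgesP_le_two (l := l) (v := v) hn
        have h2 : ([s(l.getLastI, l.headI)] : List (Sym2 ℕ)).countP
            (fun e => decide (v ∈ e)) = 0 := by
          rw [List.countP_eq_zero]
          intro e he
          rw [List.mem_singleton] at he
          subst he
          simp only [decide_eq_true_eq, Sym2.mem_iff]
          rintro (rfl | rfl)
          · exact hla (getLast?_getLastI hl)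
          · exact hh (head?_headI hl)
        omega
  · have h0 : (Comp.cyc l).edges.countP (fun e => decide (v ∈ e)) = 0 :=
      countP_edges_eq_zero (show (Comp.cyc l).WF L from ⟨hn, h3, hLl⟩) hv
    rw [Comp.edges, List.countP_append] at h0
    omega

lemma two_le_countP_cyc {L : ℕ} {l : List ℕ} (hwf : (Comp.cyc l).WF L) {v : ℕ} (hv : v ∈ l) :
    2 ≤ (Comp.cyc l).edges.countP (fun e => decide (v ∈ e)) := by
  obtain ⟨hn, h3, _⟩ := hwf
  have hl : l ≠ [] := by intro h; subst h; simp at h3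
  have h2len : 2 ≤ l.length := by omega
  rw [Comp.edges, List.countP_append]
  by_cases hh : l.head? = some v
  · have hvh : l.headI = v := by rw [head?_headI hl] at hh; simpa using hh
    have h2 : ([s(l.getLastI, l.headI)] : List (Sym2 ℕ)).countP
        (fun e => decide (v ∈ e)) = 1 := by
      simp [List.countP_cons, hvh]
    obtain ⟨e, he, hve⟩ := exists_edge_head h2len hh
    have h1 : 1 ≤ (edgesP l).countP (fun e => decide (v ∈ e)) := by
      have : 0 < (edgesP l).countP (fun e => decide (v ∈ e)) :=
        List.countP_pos_iff.mpr ⟨e, he, by simpa using hve⟩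
      omega
    omega
  · by_cases hla : l.getLast? = some v
    · have hvl : l.getLastI = v := by rw [getLast?_getLastI hl] at hla; simpa using hla
      have h2 : ([s(l.getLastI, l.headI)] : List (Sym2 ℕ)).countP
          (fun e => decide (v ∈ e)) = 1 := by
        simp [List.countP_cons, hvl]
      obtain ⟨e, he, hve⟩ := exists_edge_last h2len hla
      have h1 : 1 ≤ (edgesP l).countP (fun e => decide (v ∈ e)) := by
        have : 0 < (edgesP l).countP (fun e => decide (v ∈ e)) :=
          List.countP_pos_iff.mpr ⟨e, he, by simpa using hve⟩
        omega
      omega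
    · have := two_le_countP_edgesP hn hv hh hla
      omega

end ORLower
namespace ORLower
open List

lemma countP_edgesAll_zero {L : ℕ} {S : List Comp} (hwf : ∀ c ∈ S, c.WF L) {v : ℕ}
    (hv : ∀ c ∈ S, v ∉ c.verts) :
    (edgesAll S).countP (fun e => decide (v ∈ e)) = 0 := by
  induction S with
  | nil => simp
  | cons c S ih =>
    rw [edgesAll_cons, List.countP_append,
      countP_edges_eq_zero (hwf c (by simp)) (hv c (by simp)),
      ih (fun d hd => hwf d (List.mem_cons_of_mem _ hd))
        (fun d hd => hv d (List.mem_cons_of_mem _ hd))]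

lemma countP_edgesAll_of_mem {L : ℕ} {S : List Comp} (hwf : ∀ c ∈ S, c.WF L)
    (hdj : S.Pairwise Dj) {c0 : Comp} (hc0 : c0 ∈ S) {v : ℕ} (hv : v ∈ c0.verts) :
    (edgesAll S).countP (fun e => decide (v ∈ e)) =
      c0.edges.countP (fun e => decide (v ∈ e)) := by
  induction S with
  | nil => simp at hc0
  | cons c S ih =>
    rw [edgesAll_cons, List.countP_append]
    rw [List.pairwise_cons] at hdj
    by_cases hvc : v ∈ c.verts
    · have h0 : (edgesAll S).countP (fun e => decide (v ∈ e)) = 0 := by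
        apply countP_edgesAll_zero (fun d hd => hwf d (List.mem_cons_of_mem _ hd))
        intro d hd hvd
        exact hdj.1 d hd v hvc hvd
      have hcc : c0 = c := by
        rcases List.mem_cons.mp hc0 with rfl | hc0S
        · rfl
        · exact absurd hv (hdj.1 c0 hc0S v hvc)
      rw [h0, hcc]; omega
    · have hcS : c0 ∈ S := by
        rcases List.mem_cons.mp hc0 with rfl | hc0S
        · exact absurd hv hvc
        · exact hc0S
      rw [countP_edges_eq_zero (hwf c (by simp)) hvc,
        ih (fun d hd => hwf d (List.mem_cons_of_mem _ hd)) hdj.2 hcS]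
      omega

lemma degR_eq_countP {L : ℕ} {h : History} {S : List Comp} (inv : StInv L h S) (v : ℕ) :
    degR h v = (edgesAll S).countP (fun e => decide (v ∈ e)) :=
  inv.1.countP_eq _

lemma degR_le_two {L : ℕ} {h : History} {S : List Comp} (inv : StInv L h S) (v : ℕ) :
    degR h v ≤ 2 := by
  rw [degR_eq_countP inv]
  by_cases hv : ∃ c ∈ S, v ∈ c.verts
  · obtain ⟨c, hc, hvc⟩ := hv
    rw [countP_edgesAll_of_mem inv.2.1 inv.2.2 hc hvc]
    cases c with
    | path l => exact countP_edgesP_le_two (inv.2.1 _ hc).1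
    | cyc l => exact countP_cyc_le_two (inv.2.1 _ hc) v
  · push_neg at hv
    rw [countP_edgesAll_zero inv.2.1 hv]
    omega

/-- If a vertex has red degree ≤ 1 then it is either fresh (in no component) or an
endpoint of some path component. -/
lemma status_of_degR_le_one {L : ℕ} {h : History} {S : List Comp} (inv : StInv L h S)
    {v : ℕ} (hd : degR h v ≤ 1) :
    (∀ c ∈ S, v ∉ c.verts) ∨
      ∃ l, Comp.path l ∈ S ∧ v ∈ l ∧ (l.head? = some v ∨ l.getLast? = some v) := by
  by_cases hv : ∃ c ∈ S, v ∈ c.verts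
  · right
    obtain ⟨c, hc, hvc⟩ := hv
    rw [degR_eq_countP inv, countP_edgesAll_of_mem inv.2.1 inv.2.2 hc hvc] at hd
    cases c with
    | path l =>
      refine ⟨l, hc, hvc, ?_⟩
      by_contra hcon
      push_neg at hcon
      have := two_le_countP_edgesP (inv.2.1 _ hc).1 hvc hcon.1 hcon.2
      rw [Comp.edges] at hd
      omega
    | cyc l =>
      exfalso
      have := two_le_countP_cyc (inv.2.1 _ hc) hvc
      omega
  · left
    push_neg at hv
    exact hv

/-- In a structure consisting only of path components, any red walk stays inside a
single path component, and moves positions by at most its number of edges. -/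
lemma walk_locate {L : ℕ} {h : History} {S : List Comp} (inv : StInv L h S)
    (hpaths : ∀ l, Comp.cyc l ∉ S) :
    ∀ wk : List ℕ, wk.Chain' (adjR h) → 2 ≤ wk.length → ∀ u v : ℕ,
      wk.head? = some u → wk.getLast? = some v →
      ∃ l, Comp.path l ∈ S ∧ ∃ (a b : ℕ) (ha : a < l.length) (hb : b < l.length),
        l[a] = u ∧ l[b] = v ∧ a ≤ b + (wk.length - 1) ∧ b ≤ a + (wk.length - 1) := by
  intro wk
  induction wk with
  | nil => intro _ h2; simp at h2
  | cons a tail ih =>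
    intro hc h2 u v hu hv
    have ha : a = u := by simpa using hu
    subst ha
    match tail, h2 with
    | x :: t, _ =>
      rw [List.Chain', List.isChain_cons_cons] at hc
      obtain ⟨⟨hne, hmem⟩, hct⟩ := hc
      -- locate the edge s(a,x)
      have hmem' : s(a, x) ∈ edgesAll S := inv.1.mem_iff.mp hmem
      obtain ⟨c, hcS, hce⟩ := mem_edgesAll.mp hmem'
      obtain ⟨l, rfl⟩ : ∃ l, c = Comp.path l := by
        cases c with
        | path l => exact ⟨l, rfl⟩
        | cyc l => exact absurd hcS (hpaths l)
      rw [Comp.edges] at hce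
      obtain ⟨i, hi, hax⟩ := mem_edgesP_iff.mp hce
      have hnl : l.Nodup := (inv.2.1 _ hcS).1
      rw [Sym2.eq_iff] at hax
      -- positions of a and x in l
      obtain ⟨pa, px, hpa, hpx, hla, hlx, hdist⟩ :
          ∃ (pa px : ℕ) (hpa : pa < l.length) (hpx : px < l.length),
            l[pa] = a ∧ l[px] = x ∧ (pa = px + 1 ∨ px = pa + 1) := by
        rcases hax with ⟨h1, h2'⟩ | ⟨h1, h2'⟩
        · exact ⟨i, i + 1, by omega, hi, h1.symm, h2'.symm, Or.inr rfl⟩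
        · exact ⟨i + 1, i, hi, by omega, h1.symm, h2'.symm, Or.inl rfl⟩
      match t with
      | [] =>
        have hx : x = v := by simpa using hv
        subst hx
        exact ⟨l, hcS, pa, px, hpa, hpx, hla, hlx, by simp; omega, by simp; omega⟩
      | y :: t' =>
        have hv' : (x :: y :: t').getLast? = some v := by
          rw [List.getLast?_cons_cons] at hv ⊢
          exact hv
        obtain ⟨l2, hl2S, b1, b2, hb1, hb2, hxl2, hvl2, hd1, hd2⟩ :=
          ih hct (by simp) x v rfl hv'
        -- the two components share x, hence are equal
        have hll : Comp.path l = Comp.path l2 := by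
          by_contra hne'
          have hdj := (haveI : Std.Symm Dj := ⟨fun _ _ hcd => Dj_symm hcd⟩; inv.2.2.forall) hcS hl2S hne'
          exact hdj x (by rw [Comp.verts]; exact hlx ▸ List.getElem_mem hpx)
            (by rw [Comp.verts]; exact hxl2 ▸ List.getElem_mem hb1)
        have hleq : l = l2 := by injection hll
        subst hleq
        -- positions of x agree
        have hpxb : px = b1 := by
          rw [← hnl.getElem_inj_iff (hi := hpx) (hj := hb1)]
          rw [hlx, hxl2]
        refine ⟨l, hcS, pa, b2, hpa, hb2, hla, hvl2, ?_, ?_⟩ <;>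
          · simp only [List.length_cons] at hd1 hd2 ⊢
            omega

end ORLower
namespace ORLower
open List

/-! ### orientation of path lists -/

def orient (l : List ℕ) (u : ℕ) : List ℕ := if l.head? = some u then l.reverse else l

lemma orient_getLast? {l : List ℕ} {u : ℕ} (h : l.head? = some u ∨ l.getLast? = some u) :
    (orient l u).getLast? = some u := by
  unfold orient; split
  · next hh => rw [List.getLast?_reverse]; exact hh
  · next hh =>
    rcases h with h | h
    · exact absurd h hh
    · exact h

lemma orient_nodup {l : List ℕ} {u : ℕ} (hn : l.Nodup) : (orient l u).Nodup := by
  unfold orient; split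
  · exact List.nodup_reverse.mpr hn
  · exact hn

lemma orient_mem {l : List ℕ} {u x : ℕ} : x ∈ orient l u ↔ x ∈ l := by
  unfold orient; split
  · exact List.mem_reverse
  · rfl

lemma orient_length {l : List ℕ} {u : ℕ} : (orient l u).length = l.length := by
  unfold orient; split
  · exact List.length_reverse
  · rfl

lemma orient_edges (l : List ℕ) (u : ℕ) : (edgesP (orient l u)).Perm (edgesP l) := by
  unfold orient; split
  · exact edgesP_reverse l
  · exact List.Perm.refl _

lemma orient_head? {l : List ℕ} {u v : ℕ} (hn : l.Nodup) (huv : u ≠ v)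
    (hu : l.head? = some u ∨ l.getLast? = some u)
    (hv : l.head? = some v ∨ l.getLast? = some v) :
    (orient l u).head? = some v := by
  unfold orient; split
  · next hh =>
    rw [List.head?_reverse]
    rcases hv with hv | hv
    · exfalso; apply huv; rw [hh] at hv; exact Option.some_injective _ hv
    · exact hv
  · next hh =>
    rcases hu with hu | hu
    · exact absurd hu hh
    · rcases hv with hv | hv
      · exact hv
      · exfalso; apply huv; rw [hu] at hv; exact Option.some_injective _ hv

/-- A list of length two with prescribed head and last. -/
lemma eq_pair_of_len2 {l : List ℕ} {u v : ℕ} (h2 : l.length = 2)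
    (hh : l.head? = some v) (hl : l.getLast? = some u) : l = [v, u] := by
  match l, h2 with
  | [a, b], _ =>
    have ha : a = v := by simpa using hh
    have hb : b = u := by simpa using hl
    rw [ha, hb]

/-! ### removing a component -/

lemma edgesAll_append (s1 s2 : List Comp) :
    edgesAll (s1 ++ s2) = edgesAll s1 ++ edgesAll s2 := by
  simp [edgesAll]

lemma edgesAll_split {s1 s2 : List Comp} (c : Comp) :
    (edgesAll (s1 ++ c :: s2)).Perm (c.edges ++ edgesAll (s1 ++ s2)) := by
  rw [edgesAll_append, edgesAll_cons, edgesAll_append]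
  calc edgesAll s1 ++ (c.edges ++ edgesAll s2)
      = (edgesAll s1 ++ c.edges) ++ edgesAll s2 := by rw [List.append_assoc]
    _ ~ (c.edges ++ edgesAll s1) ++ edgesAll s2 :=
        (List.perm_append_comm).append_right _
    _ = c.edges ++ (edgesAll s1 ++ edgesAll s2) := by rw [List.append_assoc]

lemma pairwise_remove {s1 s2 : List Comp} {c : Comp}
    (hp : (s1 ++ c :: s2).Pairwise Dj) :
    (s1 ++ s2).Pairwise Dj ∧ ∀ d ∈ s1 ++ s2, Dj c d := by
  rw [List.pairwise_middle (fun {x y} h => Dj_symm h)] at hp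
  rw [List.pairwise_cons] at hp
  exact ⟨hp.2, hp.1⟩

lemma mem_of_mem_remove {s1 s2 : List Comp} {d : Comp} (hd : d ∈ s1 ++ s2) :
    d ∈ s1 ++ c :: s2 := by
  rw [List.mem_append] at hd ⊢
  rcases hd with hd | hd
  · exact Or.inl hd
  · exact Or.inr (List.mem_cons_of_mem _ hd)

/-! ### the step lemma -/

/-- Extending a path by a fresh vertex `v` attached at the end `u` of path `l`. -/
lemma extend_case {L : ℕ} {h : History} {S : List Comp} (inv : StInv L h S)
    {u v : ℕ} {l : List ℕ} (hlS : Comp.path l ∈ S)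
    (hue : l.head? = some u ∨ l.getLast? = some u)
    (hvf : ∀ c ∈ S, v ∉ c.verts) (huv : u ≠ v) :
    ∃ S', StInv L ((s(u, v), true) :: h) S' := by
  obtain ⟨s1, s2, hsplit⟩ := List.append_of_mem hlS
  have hwfl : (Comp.path l).WF L := inv.2.1 _ hlS
  set l' := orient l u with hl'
  have hl'last : l'.getLast? = some u := orient_getLast? hue
  refine ⟨Comp.path (l' ++ [v]) :: (s1 ++ s2), ?_, ?_, ?_⟩
  · -- permutation
    rw [redList_cons_true]
    have hsplitperm : (edgesAll S).Perm ((Comp.path l).edges ++ edgesAll (s1 ++ s2)) := by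
      rw [hsplit]; exact edgesAll_split _
    have hE : edgesAll (Comp.path (l' ++ [v]) :: (s1 ++ s2)) =
        edgesP (l' ++ [v]) ++ edgesAll (s1 ++ s2) := rfl
    rw [hE, edgesP_append hl'last (show ([v] : List ℕ).head? = some v from rfl)]
    simp only [edgesP_single]
    calc s(u, v) :: redList h
        ~ s(u, v) :: edgesAll S := inv.1.cons _
      _ ~ s(u, v) :: (edgesP l ++ edgesAll (s1 ++ s2)) := hsplitperm.cons _
      _ ~ s(u, v) :: (edgesP l' ++ edgesAll (s1 ++ s2)) :=
          (((orient_edges l u).symm.append_right _).cons _)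
      _ ~ (edgesP l' ++ [s(u, v)]) ++ edgesAll (s1 ++ s2) := by
          have h1 : (edgesP l' ++ [s(u, v)]).Perm (s(u, v) :: edgesP l') :=
            List.perm_append_singleton _ _
          have h2 := h1.append_right (edgesAll (s1 ++ s2))
          exact h2.symm
  · -- WF
    intro c hc
    rcases List.mem_cons.mp hc with rfl | hc
    · constructor
      · rw [List.nodup_append]
        refine ⟨orient_nodup hwfl.1, by simp, ?_⟩
        intro x hx y hy hxy
        rw [List.mem_singleton] at hy
        subst hy
        subst hxy
        exact hvf _ hlS (orient_mem.mp hx)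
      · simp only [List.length_append, List.length_singleton]
        have := hwfl.2
        rw [orient_length]
        omega
    · exact inv.2.1 _ (hsplit ▸ mem_of_mem_remove hc)
  · -- pairwise
    have hpr := pairwise_remove (hsplit ▸ inv.2.2)
    rw [List.pairwise_cons]
    refine ⟨?_, hpr.1⟩
    intro d hd x hx
    rw [Comp.verts, List.mem_append] at hx
    rcases hx with hx | hx
    · exact hpr.2 d hd x (by rw [Comp.verts]; exact orient_mem.mp hx)
    · rw [List.mem_singleton] at hx
      subst hx
      exact hvf d (hsplit ▸ mem_of_mem_remove hd)

/-- Main step lemma: if the invariant holds and Builder plays a fresh non-loop edge,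
the invariant can be maintained. -/
lemma step_inv {L : ℕ} {h : History} {S : List Comp} (inv : StInv L h S) (e : Sym2 ℕ)
    (hnd : ¬ e.IsDiag) (hf : ∀ c : Bool, (e, c) ∉ h) :
    ∃ S', StInv L ((e, painter L h e) :: h) S' := by
  induction e using Sym2.ind with
  | _ u v =>
  have huv : u ≠ v := fun hc => hnd (Sym2.mk_isDiag_iff.mpr hc)
  cases hb : painter L h s(u, v) with
  | false =>
    exact ⟨S, by rw [redList_cons_false]; exact inv.1, inv.2.1, inv.2.2⟩
  | true =>
    have hs : Safe L h u v := painter_true_iff.mp hb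
    obtain ⟨hdu, hdv, hnl1, hnl2⟩ := hs
    have hfresh : s(u, v) ∉ redList h := fun hc => hf true (mem_redList.mp hc)
    rcases status_of_degR_le_one inv hdu with hUf | ⟨l1, hl1S, hul1, huend⟩
    · rcases status_of_degR_le_one inv hdv with hVf | ⟨l2, hl2S, hvl2, hvend⟩
      · -- both fresh
        refine ⟨Comp.path [u, v] :: S, ?_, ?_, ?_⟩
        · rw [redList_cons_true]
          have hE : edgesAll (Comp.path [u, v] :: S) = s(u, v) :: edgesAll S := rfl
          rw [hE]
          exact inv.1.cons _
        · intro c hc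
          rcases List.mem_cons.mp hc with rfl | hc
          · exact ⟨by simp [huv], by simp⟩
          · exact inv.2.1 _ hc
        · rw [List.pairwise_cons]
          refine ⟨?_, inv.2.2⟩
          intro d hd x hx
          rw [Comp.verts] at hx
          rcases List.mem_cons.mp hx with rfl | hx
          · exact hUf d hd
          · rw [List.mem_singleton] at hx; subst hx; exact hVf d hd
      · -- u fresh, v end of l2 : extend in the other direction
        have := extend_case inv hl2S hvend hUf (Ne.symm huv)
        obtain ⟨S', hS'⟩ := this
        exact ⟨S', by rwa [Sym2.eq_swap] at hS'⟩
    · rcases status_of_degR_le_one inv hdv with hVf | ⟨l2, hl2S, hvl2, hvend⟩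
      · -- v fresh, u end of l1
        exact extend_case inv hl1S huend hVf huv
      · by_cases hvl1 : v ∈ l1
        · -- same path: u, v its two ends; form a cycle
          have hl12 : Comp.path l2 = Comp.path l1 := by
            by_contra hne'
            exact (haveI : Std.Symm Dj := ⟨fun _ _ hcd => Dj_symm hcd⟩; inv.2.2.forall) hl2S hl1S hne'
              v (by rw [Comp.verts]; exact hvl2) (by rw [Comp.verts]; exact hvl1)
          have hl2eq : l2 = l1 := by injection hl12
          subst hl2eq
          -- now v is an end of l2 = l1, rename
          obtain ⟨s1, s2, hsplit⟩ := List.append_of_mem hl1S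
          have hwfl : (Comp.path l2).WF L := inv.2.1 _ hl1S
          set l' := orient l2 u with hl'def
          have hl'last : l'.getLast? = some u := orient_getLast? huend
          have hl'head : l'.head? = some v := orient_head? hwfl.1 huv huend hvend
          have hl'nodup : l'.Nodup := orient_nodup hwfl.1
          have hl'len : l'.length = l2.length := orient_length
          have hedge_mem : ∀ e ∈ edgesP l', e ∈ redList h := by
            intro e he
            have : e ∈ edgesP l2 := ((orient_edges l2 u).mem_iff).mp he
            apply inv.1.symm.mem_iff.mp
            rw [mem_edgesAll]
            exact ⟨Comp.path l2, hl1S, this⟩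
          have hlen_ne2 : l2.length ≠ 2 := by
            intro h2
            have : l' = [v, u] := eq_pair_of_len2 (by omega) hl'head hl'last
            apply hfresh
            have : s(v, u) ∈ edgesP l' := by rw [this]; simp
            rw [Sym2.eq_swap] at this
            exact hedge_mem _ this
          have hlenL : L + 1 ≤ l2.length := by
            by_contra hcon
            push_neg at hcon
            apply hnl2
            refine ⟨l', ?_, hl'head, hl'last, ?_, ?_⟩
            · exact chain'_of_edgesP hl'nodup hedge_mem
            · rw [hl'len]; exact hwfl.2
            · omega
          have hlen3 : 3 ≤ l2.length := by
            have := hwfl.2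
            omega
          refine ⟨Comp.cyc l' :: (s1 ++ s2), ?_, ?_, ?_⟩
          · rw [redList_cons_true]
            have hsplitperm : (edgesAll S).Perm
                ((Comp.path l2).edges ++ edgesAll (s1 ++ s2)) := by
              rw [hsplit]; exact edgesAll_split _
            have hE : edgesAll (Comp.cyc l' :: (s1 ++ s2)) =
                (edgesP l' ++ [s(l'.getLastI, l'.headI)]) ++ edgesAll (s1 ++ s2) := rfl
            have hgI : l'.getLastI = u := by
              have hne : l' ≠ [] := by
                intro hl0; rw [hl0] at hl'last; simp at hl'last
              rw [getLast?_getLastI hne] at hl'last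
              simpa using hl'last
            have hhI : l'.headI = v := by
              have hne : l' ≠ [] := by
                intro hl0; rw [hl0] at hl'head; simp at hl'head
              rw [head?_headI hne] at hl'head
              simpa using hl'head
            rw [hE, hgI, hhI]
            calc s(u, v) :: redList h
                ~ s(u, v) :: edgesAll S := inv.1.cons _
              _ ~ s(u, v) :: (edgesP l2 ++ edgesAll (s1 ++ s2)) := hsplitperm.cons _
              _ ~ s(u, v) :: (edgesP l' ++ edgesAll (s1 ++ s2)) :=
                  (((orient_edges l2 u).symm.append_right _).cons _)
              _ ~ (edgesP l' ++ [s(u, v)]) ++ edgesAll (s1 ++ s2) :=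
                  ((List.perm_append_singleton _ _).append_right _).symm
          · intro c hc
            rcases List.mem_cons.mp hc with rfl | hc
            · exact ⟨hl'nodup, by omega, by omega⟩
            · exact inv.2.1 _ (hsplit ▸ mem_of_mem_remove hc)
          · have hpr := pairwise_remove (hsplit ▸ inv.2.2)
            rw [List.pairwise_cons]
            refine ⟨?_, hpr.1⟩
            intro d hd x hx
            rw [Comp.verts] at hx
            exact hpr.2 d hd x (by rw [Comp.verts]; exact orient_mem.mp hx)
        · -- genuinely different paths: merge
          have hne12 : Comp.path l2 ≠ Comp.path l1 := by
            intro hc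
            have : l2 = l1 := by injection hc
            subst this
            exact hvl1 hvl2
          obtain ⟨s1, s2, hsplit⟩ := List.append_of_mem hl1S
          have hl2mem : Comp.path l2 ∈ s1 ++ s2 := by
            have : Comp.path l2 ∈ s1 ++ Comp.path l1 :: s2 := hsplit ▸ hl2S
            rw [List.mem_append] at this ⊢
            rcases this with hh | hh
            · exact Or.inl hh
            · rcases List.mem_cons.mp hh with hq | hq
              · exact absurd hq hne12
              · exact Or.inr hq
          obtain ⟨t1, t2, hsplit2⟩ := List.append_of_mem hl2mem
          have hwf1 : (Comp.path l1).WF L := inv.2.1 _ hl1S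
          have hwf2 : (Comp.path l2).WF L := inv.2.1 _ hl2S
          set l1' := orient l1 u with hl1'def
          have h1last : l1'.getLast? = some u := orient_getLast? huend
          set l2' := (orient l2 v).reverse with hl2'def
          have h2head : l2'.head? = some v := by
            rw [hl2'def, List.head?_reverse]
            exact orient_getLast? hvend
          have hpr1 := pairwise_remove (hsplit ▸ inv.2.2)
          have hpr2 := pairwise_remove (hsplit2 ▸ hpr1.1)
          have hdj12 : Dj (Comp.path l1) (Comp.path l2) := hpr1.2 _ hl2mem
          refine ⟨Comp.path (l1' ++ l2') :: (t1 ++ t2), ?_, ?_, ?_⟩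
          · rw [redList_cons_true]
            have hsp1 : (edgesAll S).Perm
                ((Comp.path l1).edges ++ edgesAll (s1 ++ s2)) := by
              rw [hsplit]; exact edgesAll_split _
            have hsp2 : (edgesAll (s1 ++ s2)).Perm
                ((Comp.path l2).edges ++ edgesAll (t1 ++ t2)) := by
              rw [hsplit2]; exact edgesAll_split _
            have hE : edgesAll (Comp.path (l1' ++ l2') :: (t1 ++ t2)) =
                edgesP (l1' ++ l2') ++ edgesAll (t1 ++ t2) := rfl
            rw [hE, edgesP_append h1last h2head]
            have e2perm : (edgesP l2').Perm (edgesP l2) := by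
              rw [hl2'def]
              exact (edgesP_reverse _).trans (orient_edges l2 v)
            calc s(u, v) :: redList h
                ~ s(u, v) :: edgesAll S := inv.1.cons _
              _ ~ s(u, v) :: ((edgesP l1) ++ edgesAll (s1 ++ s2)) := hsp1.cons _
              _ ~ s(u, v) :: ((edgesP l1) ++ ((edgesP l2) ++ edgesAll (t1 ++ t2))) :=
                  ((hsp2.append_left _).cons _)
              _ ~ s(u, v) :: ((edgesP l1') ++ ((edgesP l2') ++ edgesAll (t1 ++ t2))) := by
                  refine Perm.cons _ ?_
                  exact ((orient_edges l1 u).symm).append (e2perm.symm.append_right _)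
              _ = s(u, v) :: (((edgesP l1') ++ (edgesP l2')) ++ edgesAll (t1 ++ t2)) := by
                  rw [List.append_assoc]
              _ ~ (edgesP l1' ++ s(u, v) :: edgesP l2') ++ edgesAll (t1 ++ t2) := by
                  have := (List.perm_middle (a := s(u, v)) (l₁ := edgesP l1')
                    (l₂ := edgesP l2'))
                  exact (this.append_right _).symm
          · intro c hc
            rcases List.mem_cons.mp hc with rfl | hc
            · constructor
              · rw [List.nodup_append]
                refine ⟨orient_nodup hwf1.1, List.nodup_reverse.mpr (orient_nodup hwf2.1), ?_⟩
                intro x hx1 y hx2 hxy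
                subst hxy
                have hx1' : x ∈ l1 := orient_mem.mp hx1
                have hx2' : x ∈ l2 := orient_mem.mp (List.mem_reverse.mp hx2)
                exact hdj12 x (by rw [Comp.verts]; exact hx1')
                  (by rw [Comp.verts]; exact hx2')
              · simp only [List.length_append]
                have := hwf1.2
                have h1l : l1'.length = l1.length := orient_length
                omega
            · apply inv.2.1
              rw [hsplit]
              apply mem_of_mem_remove
              rw [hsplit2]
              exact mem_of_mem_remove hc
          · rw [List.pairwise_cons]
            refine ⟨?_, hpr2.1⟩
            intro d hd x hx
            rw [Comp.verts, List.mem_append] at hx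
            have hdS' : d ∈ s1 ++ s2 := hsplit2 ▸ mem_of_mem_remove hd
            rcases hx with hx | hx
            · exact hpr1.2 d hdS' x (by rw [Comp.verts]; exact orient_mem.mp hx)
            · exact hpr2.2 d hd x
                (by rw [Comp.verts]; exact orient_mem.mp (List.mem_reverse.mp hx))

end ORLower
namespace ORLower
open List

lemma play_inv {L : ℕ} (B : BuilderStrategy) (hB : ValidStrategy B) (n : ℕ) :
    ∃ S, StInv L (play B (painter L) n) S := by
  induction n with
  | zero =>
    refine ⟨[], ?_, by simp, by simp⟩
    show (redList []).Perm (edgesAll [])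
    simp [redList]
  | succ n ih =>
    obtain ⟨S, hS⟩ := ih
    obtain ⟨hnd, hfresh⟩ := hB (play B (painter L) n)
    obtain ⟨S', hS'⟩ := step_inv hS _ hnd hfresh
    exact ⟨S', hS'⟩

lemma blue_reason {L : ℕ} {B : BuilderStrategy} {n : ℕ} {u v : ℕ}
    (hmem : (s(u, v), false) ∈ play B (painter L) n) :
    2 ≤ degR (play B (painter L) n) u ∨ 2 ≤ degR (play B (painter L) n) v ∨
      Link (play B (painter L) n) L u v ∨ Link (play B (painter L) n) L v u := by
  obtain ⟨m, hm, hx⟩ := mem_play hmem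
  have he : B (play B (painter L) m) = s(u, v) := (Prod.ext_iff.mp hx).1.symm
  have hc : painter L (play B (painter L) m) (B (play B (painter L) m)) = false :=
    (Prod.ext_iff.mp hx).2.symm
  rw [he] at hc
  have hns := painter_false hc
  unfold Safe at hns
  obtain ⟨t, ht⟩ := play_prefix B (painter L) (le_of_lt hm)
  rw [ht]
  by_cases h1 : degR (play B (painter L) m) u ≤ 1
  · by_cases h2 : degR (play B (painter L) m) v ≤ 1
    · by_cases h3 : Link (play B (painter L) m) L u v
      · exact Or.inr (Or.inr (Or.inl (Link_mono h3)))
      · have h4 : Link (play B (painter L) m) L v u := by tauto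
        exact Or.inr (Or.inr (Or.inr (Link_mono h4)))
    · refine Or.inr (Or.inl ?_)
      have := degR_mono t (play B (painter L) m) v
      omega
  · refine Or.inl ?_
    have := degR_mono t (play B (painter L) m) u
    omega

lemma no_red_K13 {L : ℕ} {B : BuilderStrategy} (hB : ValidStrategy B) (n : ℕ) :
    ¬ HasCopy K13 (histGraph (play B (painter L) n) true) := by
  rintro ⟨f, hinj, hhom⟩
  set h := play B (painter L) n with hh
  obtain ⟨S, hS⟩ := play_inv (L := L) B hB n
  set w := f (Sum.inl 0) with hw
  have hadj : ∀ i : Fin 3, (histGraph h true).Adj w (f (Sum.inr i)) := by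
    intro i
    apply hhom
    exact Or.inl ⟨by simp, by simp⟩
  have hmem : ∀ i : Fin 3, s(w, f (Sum.inr i)) ∈ redList h := by
    intro i
    exact mem_redList.mpr (histGraph_adj.mp (hadj i)).2
  have hne : ∀ i : Fin 3, w ≠ f (Sum.inr i) := fun i => (histGraph_adj.mp (hadj i)).1
  have hxne : ∀ i j : Fin 3, i ≠ j → f (Sum.inr i) ≠ f (Sum.inr j) := by
    intro i j hij hc
    exact hij (Sum.inr_injective (hinj hc))
  have hedgene : ∀ i j : Fin 3, i ≠ j → s(w, f (Sum.inr i)) ≠ s(w, f (Sum.inr j)) := by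
    intro i j hij hc
    rw [Sym2.eq_iff] at hc
    rcases hc with ⟨_, hc⟩ | ⟨hc1, hc2⟩
    · exact hxne i j hij hc
    · exact hne i (hc1 ▸ hc2.symm) -- fix below if broken
  -- three distinct red edges at w
  set e0 := s(w, f (Sum.inr 0))
  set e1 := s(w, f (Sum.inr 1))
  set e2 := s(w, f (Sum.inr 2))
  have hnd : ([e0, e1, e2] : List (Sym2 ℕ)).Nodup := by
    have h01 := hedgene 0 1 (by decide)
    have h02 := hedgene 0 2 (by decide)
    have h12 := hedgene 1 2 (by decide)
    simp only [e0, e1, e2, List.nodup_cons, List.mem_cons, List.mem_singleton,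
      List.not_mem_nil, or_false, List.nodup_nil, and_true, not_or]
    exact ⟨⟨h01, h02⟩, h12, not_false⟩
  have hsub : ([e0, e1, e2] : List (Sym2 ℕ)).toFinset ⊆
      ((redList h).filter (fun e => decide (w ∈ e))).toFinset := by
    intro e he
    rw [List.mem_toFinset] at he ⊢
    rw [List.mem_filter]
    rcases List.mem_cons.mp he with rfl | he
    · exact ⟨hmem 0, by simp [e0]⟩
    rcases List.mem_cons.mp he with rfl | he
    · exact ⟨hmem 1, by simp [e1]⟩
    rcases List.mem_cons.mp he with rfl | he
    · exact ⟨hmem 2, by simp [e2]⟩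
    · simp at he
  have h3 : 3 ≤ degR h w := by
    have hc1 : ([e0, e1, e2] : List (Sym2 ℕ)).toFinset.card = 3 :=
      List.toFinset_card_of_nodup hnd
    have hc2 := Finset.card_le_card hsub
    have hc3 := List.toFinset_card_le ((redList h).filter (fun e => decide (w ∈ e)))
    rw [degR, List.countP_eq_length_filter]
    omega
  have h2 := degR_le_two hS w
  rw [← hh] at h2
  omega

end ORLower
namespace ORLower
open List

lemma internal_of_degR_two {L : ℕ} {h : History} {S : List Comp} (inv : StInv L h S)
    (hpaths : ∀ l, Comp.cyc l ∉ S) {w : ℕ} (h2 : 2 ≤ degR h w) :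
    ∃ l, Comp.path l ∈ S ∧ w ∈ l ∧ l.head? ≠ some w ∧ l.getLast? ≠ some w := by
  have hex : ∃ c ∈ S, w ∈ c.verts := by
    by_contra hcon
    push_neg at hcon
    rw [degR_eq_countP inv, countP_edgesAll_zero inv.2.1 hcon] at h2
    omega
  obtain ⟨c, hcS, hwc⟩ := hex
  obtain ⟨l, rfl⟩ : ∃ l, c = Comp.path l := by
    cases c with
    | path l => exact ⟨l, rfl⟩
    | cyc l => exact absurd hcS (hpaths l)
  rw [degR_eq_countP inv, countP_edgesAll_of_mem inv.2.1 inv.2.2 hcS hwc] at h2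
  have := internal_of_two_le (inv.2.1 _ hcS).1 h2
  exact ⟨l, hcS, this⟩

lemma end_position {l : List ℕ} (hn : l.Nodup) {w : ℕ} {a : ℕ} (ha : a < l.length)
    (hla : l[a] = w) (hend : l.head? = some w ∨ l.getLast? = some w) :
    a = 0 ∨ a = l.length - 1 := by
  have hne : l ≠ [] := by intro hl; subst hl; simp at ha
  have h0lt : 0 < l.length := by cases l with
    | nil => simp at hne
    | cons x t => simp
  rcases hend with hend | hend
  · left
    have h0 : l[0]'h0lt = w := by
      cases l with
      | nil => simp at hne
      | cons x t => simpa using hend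
    have heq : l[a]'ha = l[0]'h0lt := by rw [hla, h0]
    exact hn.getElem_inj_iff.mp heq
  · right
    have hlen : l.length - 1 < l.length := by omega
    have h0 : l[l.length - 1]'hlen = w := by
      rw [List.getLast?_eq_getLast hne] at hend
      have hgl := List.getLast_eq_getElem (l := l) hne
      rw [hgl] at hend
      simpa using hend
    have heq : l[a]'ha = l[l.length - 1]'hlen := by rw [hla, h0]
    exact hn.getElem_inj_iff.mp heq

lemma charge_of_link {L : ℕ} {h : History} {S : List Comp} (inv : StInv L h S)
    (hpaths : ∀ l, Comp.cyc l ∉ S) {u v : ℕ} (huv : u ≠ v) (hlk : Link h L u v) :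
    ∃ l, Comp.path l ∈ S ∧
      ((∃ w, (w = u ∨ w = v) ∧ w ∈ l ∧ l.head? ≠ some w ∧ l.getLast? ≠ some w) ∨
        (((u = l.headI ∧ v = l.getLastI) ∨ (u = l.getLastI ∧ v = l.headI)) ∧ l.length ≤ L)) := by
  obtain ⟨wk, hc, hhd, hlt, h2, hL⟩ := hlk
  obtain ⟨l, hlS, a, b, ha, hb, hua, hvb, hab1, hab2⟩ :=
    walk_locate inv hpaths wk hc h2 u v hhd hlt
  have hn : l.Nodup := (inv.2.1 _ hlS).1
  have hlen2 : 2 ≤ l.length := (inv.2.1 _ hlS).2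
  have hne : l ≠ [] := by intro hl; subst hl; simp at ha
  refine ⟨l, hlS, ?_⟩
  by_cases hu : l.head? ≠ some u ∧ l.getLast? ≠ some u
  · exact Or.inl ⟨u, Or.inl rfl, by rw [← hua]; exact List.getElem_mem ha, hu.1, hu.2⟩
  · by_cases hv : l.head? ≠ some v ∧ l.getLast? ≠ some v
    · exact Or.inl ⟨v, Or.inr rfl, by rw [← hvb]; exact List.getElem_mem hb, hv.1, hv.2⟩
    · right
      push_neg at hu hv
      have hu' : l.head? = some u ∨ l.getLast? = some u := by tauto
      have hv' : l.head? = some v ∨ l.getLast? = some v := by tauto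
      have hA := end_position hn ha hua hu'
      have hB := end_position hn hb hvb hv'
      have hAB : a ≠ b := by
        rintro rfl
        exact huv (by rw [← hua, ← hvb])
      have hI : l.headI = l[0]'(by omega) := by
        cases l with
        | nil => simp at hne
        | cons x t => rfl
      have hG : l.getLastI = l[l.length - 1]'(by omega) := by
        rw [List.getLastI_eq_getLast?, List.getLast?_eq_getLast hne,
          List.getLast_eq_getElem, Option.getD_some]
      rcases hA with rfl | rfl
      · rcases hB with rfl | rfl
        · exact absurd rfl hAB
        · refine ⟨Or.inl ⟨(hI.trans hua).symm, (hG.trans hvb).symm⟩, by omega⟩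
      · rcases hB with rfl | rfl
        · refine ⟨Or.inr ⟨(hG.trans hua).symm, (hI.trans hvb).symm⟩, by omega⟩
        · exact absurd rfl hAB

/-- sum over the deduplicated list is at most the sum over the list -/
lemma toFinset_sum_le_list_sum (S : List Comp) (f : Comp → ℕ) :
    S.toFinset.sum f ≤ (S.map f).sum := by
  induction S with
  | nil => simp
  | cons c S ih =>
    rw [List.toFinset_cons, List.map_cons, List.sum_cons]
    by_cases hc : c ∈ S.toFinset
    · rw [Finset.insert_eq_self.mpr hc]
      exact le_trans ih (Nat.le_add_left _ _)
    · rw [Finset.sum_insert hc]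
      exact Nat.add_le_add_left ih _

lemma sum_gbound_le {S : List Comp} {pe gb : Comp → ℕ}
    (h1 : ∀ c ∈ S, 1 ≤ pe c) (h2 : ∀ c ∈ S, gb c + 1 ≤ 2 * pe c) :
    (S.map gb).sum + S.length ≤ 2 * (S.map pe).sum := by
  induction S with
  | nil => simp
  | cons c S ih =>
    simp only [List.map_cons, List.sum_cons, List.length_cons]
    have hc := h2 c (by simp)
    have := ih (fun d hd => h1 d (List.mem_cons_of_mem _ hd))
      (fun d hd => h2 d (List.mem_cons_of_mem _ hd))
    omega

end ORLower
namespace ORLower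
open List

@[simp] lemma verts_path (l : List ℕ) : (Comp.path l).verts = l := rfl
@[simp] lemma verts_cyc (l : List ℕ) : (Comp.cyc l).verts = l := rfl

def Internal (w : ℕ) (l : List ℕ) : Prop :=
  w ∈ l ∧ l.head? ≠ some w ∧ l.getLast? ≠ some w

def Good (L : ℕ) (F : ℕ → ℕ) (i : ℕ) (c : Comp) : Prop :=
  (Internal (F i) c.verts ∨ Internal (F (i + 1)) c.verts) ∨
    (((F i = c.verts.headI ∧ F (i + 1) = c.verts.getLastI) ∨
      (F i = c.verts.getLastI ∧ F (i + 1) = c.verts.headI)) ∧ c.verts.length ≤ L)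

noncomputable def gbound (L : ℕ) (c : Comp) : ℕ :=
  2 * (c.verts.length - 2) + (if c.verts.length ≤ L then 1 else 0)

lemma no_blue_path {ℓ : ℕ} (hℓ : 2 ≤ ℓ) {B : BuilderStrategy} (hB : ValidStrategy B)
    {k : ℕ} (hk : k ≤ 3 * ℓ / 2 - 1) :
    ¬ HasCopy (pathGraph ℓ) (histGraph (play B (painter (ℓ / 2)) k) false) := by
  classical
  set L := ℓ / 2 with hLdef
  set h := play B (painter L) k with hh
  rintro ⟨f, hinj, hhom⟩
  obtain ⟨S, hS⟩ := play_inv (L := L) B hB k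
  rw [← hh] at hS
  set F : ℕ → ℕ := fun i => if hi : i < ℓ then f ⟨i, hi⟩ else 0 with hF
  have hFinj : ∀ i j, i < ℓ → j < ℓ → F i = F j → i = j := by
    intro i j hi hj hij
    rw [hF] at hij
    simp only [dif_pos hi, dif_pos hj] at hij
    have h2 : (⟨i, hi⟩ : Fin ℓ) = ⟨j, hj⟩ := hinj hij
    exact Fin.mk.inj_iff.mp h2
  have hblue : ∀ i, i + 1 < ℓ → (s(F i, F (i + 1)), false) ∈ h ∧ F i ≠ F (i + 1) := by
    intro i hi
    have hadj : (pathGraph ℓ).Adj ⟨i, by omega⟩ ⟨i + 1, hi⟩ :=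
      SimpleGraph.pathGraph_adj.mpr (Or.inl rfl)
    have hba := hhom _ _ hadj
    have hFi : F i = f ⟨i, by omega⟩ := by rw [hF]; simp only [dif_pos (show i < ℓ by omega)]
    have hFi1 : F (i + 1) = f ⟨i + 1, hi⟩ := by rw [hF]; simp only [dif_pos hi]
    rw [hFi, hFi1]
    exact ⟨(histGraph_adj.mp hba).2, (histGraph_adj.mp hba).1⟩
  -- counting edges
  have hlen : h.length = k := play_length B (painter L) k
  set bl := (List.range (ℓ - 1)).map (fun i => s(F i, F (i + 1))) with hbl
  have hblnd : bl.Nodup := by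
    rw [hbl]
    refine List.Nodup.map_on ?_ List.nodup_range
    intro i hi j hj hij
    rw [List.mem_range] at hi hj
    rw [Sym2.eq_iff] at hij
    rcases hij with ⟨h1, h2⟩ | ⟨h1, h2⟩
    · exact hFinj i j (by omega) (by omega) h1
    · have e1 : i = j + 1 := hFinj _ _ (by omega) (by omega) h1
      have e2 : i + 1 = j := hFinj _ _ (by omega) (by omega) h2
      omega
  set bll := (h.filter (fun x => !x.2)).map Prod.fst with hbll
  have hsubbl : bl.toFinset ⊆ bll.toFinset := by
    intro e he
    rw [List.mem_toFinset] at he ⊢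
    rw [hbl, List.mem_map] at he
    obtain ⟨i, hi, rfl⟩ := he
    rw [List.mem_range] at hi
    obtain ⟨hmem, _⟩ := hblue i (by omega)
    rw [hbll, List.mem_map]
    exact ⟨(s(F i, F (i + 1)), false), List.mem_filter.mpr ⟨hmem, by simp⟩, rfl⟩
  have hcount : (redList h).length + bll.length = k := by
    have key : ∀ hs : History,
        (redList hs).length + ((hs.filter (fun x => !x.2)).map Prod.fst).length
          = hs.length := by
      intro hs
      induction hs with
      | nil => rfl
      | cons x t ih =>
        obtain ⟨e, b⟩ := x
        cases b
        · simp only [redList_cons_false]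
          rw [List.filter_cons_of_pos (by simp)]
          simp only [List.map_cons, List.length_cons]
          omega
        · rw [redList_cons_true]
          rw [List.filter_cons_of_neg (by simp)]
          simp only [List.length_cons]
          omega
    rw [← hlen, hbll]
    exact key h
  have hblen : ℓ - 1 ≤ bll.length := by
    have h1 : bl.toFinset.card = ℓ - 1 := by
      rw [List.toFinset_card_of_nodup hblnd, hbl, List.length_map, List.length_range]
    have h2 := Finset.card_le_card hsubbl
    have h3 := List.toFinset_card_le bll
    omega
  have hr : (redList h).length ≤ L := by rw [hLdef]; omega
  have hrsum : (redList h).length = (S.map (fun c => c.edges.length)).sum := by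
    rw [hS.1.length_eq]
    rw [edgesAll, List.length_flatten, List.map_map]
    rfl
  have hnocyc : ∀ l, Comp.cyc l ∉ S := by
    intro l hcyc
    have hwf := hS.2.1 _ hcyc
    have hel : (Comp.cyc l).edges.length = l.length := by
      rw [Comp.edges, List.length_append, length_edgesP]
      have := hwf.2.1
      simp only [List.length_singleton]
      omega
    have hmem : (Comp.cyc l).edges.length ∈ S.map (fun c => c.edges.length) :=
      List.mem_map_of_mem hcyc
    have hle := List.single_le_sum (fun (x : ℕ) _ => Nat.zero_le x) _ hmem
    have := hwf.2.2
    omega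
  have hpathrep : ∀ c ∈ S, ∃ l, c = Comp.path l := by
    intro c hc
    cases c with
    | path l => exact ⟨l, rfl⟩
    | cyc l => exact absurd hc (hnocyc l)
  -- charging
  have hcharge : ∀ i, i + 1 < ℓ → ∃ c ∈ S, Good L F i c := by
    intro i hi
    obtain ⟨hmem, hFne⟩ := hblue i hi
    rw [hh] at hmem
    have hreason := blue_reason (L := L) hmem
    rw [← hh] at hreason
    rcases hreason with hd | hd | hlk | hlk
    · obtain ⟨l, hlS, hprop⟩ := internal_of_degR_two hS hnocyc hd
      exact ⟨Comp.path l, hlS, Or.inl (Or.inl hprop)⟩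
    · obtain ⟨l, hlS, hprop⟩ := internal_of_degR_two hS hnocyc hd
      exact ⟨Comp.path l, hlS, Or.inl (Or.inr hprop)⟩
    · obtain ⟨l, hlS, hgood⟩ := charge_of_link hS hnocyc hFne hlk
      refine ⟨Comp.path l, hlS, ?_⟩
      rcases hgood with ⟨w, hw, hint⟩ | ⟨hbt, hlen⟩
      · rcases hw with rfl | rfl
        · exact Or.inl (Or.inl hint)
        · exact Or.inl (Or.inr hint)
      · exact Or.inr ⟨by tauto, hlen⟩
    · obtain ⟨l, hlS, hgood⟩ := charge_of_link hS hnocyc (Ne.symm hFne) hlk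
      refine ⟨Comp.path l, hlS, ?_⟩
      rcases hgood with ⟨w, hw, hint⟩ | ⟨hbt, hlen⟩
      · rcases hw with rfl | rfl
        · exact Or.inl (Or.inr hint)
        · exact Or.inl (Or.inl hint)
      · exact Or.inr ⟨by tauto, hlen⟩
  -- per-component bound
  have hGbound : ∀ c ∈ S,
      ((Finset.range (ℓ - 1)).filter (fun i => Good L F i c)).card ≤ gbound L c := by
    intro c hcS
    obtain ⟨l, rfl⟩ := hpathrep c hcS
    have hwf := hS.2.1 _ hcS
    have hn : l.Nodup := hwf.1
    have hlen2 : (2:ℕ) ≤ l.length := hwf.2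
    have hne : l ≠ [] := by intro hl; subst hl; simp at hlen2
    set A := (Finset.range (ℓ - 1)).filter
      (fun i => Internal (F i) l ∨ Internal (F (i + 1)) l) with hA
    set Bf := (Finset.range (ℓ - 1)).filter
      (fun i => (F i = l.headI ∧ F (i + 1) = l.getLastI) ∨
        (F i = l.getLastI ∧ F (i + 1) = l.headI)) with hBf
    set B' := if l.length ≤ L then Bf else ∅ with hB'
    have hsplit : (Finset.range (ℓ - 1)).filter (fun i => Good L F i (Comp.path l))
        ⊆ A ∪ B' := by
      intro i hi
      rw [Finset.mem_filter] at hi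
      obtain ⟨hir, hgood⟩ := hi
      rw [Finset.mem_union]
      rcases hgood with hat | ⟨hbt, hll⟩
      · refine Or.inl (Finset.mem_filter.mpr ⟨hir, ?_⟩)
        simpa only [verts_path] using hat
      · right
        simp only [verts_path] at hbt hll
        rw [hB', if_pos hll]
        exact Finset.mem_filter.mpr ⟨hir, hbt⟩
    -- bound A
    set IntF := (l.toFinset.erase l.headI).erase l.getLastI with hIntF
    have hmemIntF : ∀ w, Internal w l → w ∈ IntF := by
      intro w hw
      obtain ⟨hwl, hwh, hwg⟩ := hw
      rw [hIntF, Finset.mem_erase, Finset.mem_erase]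
      refine ⟨?_, ?_, List.mem_toFinset.mpr hwl⟩
      · intro hc
        exact hwg (by rw [hc]; exact getLast?_getLastI hne)
      · intro hc
        exact hwh (by rw [hc]; exact head?_headI hne)
    have hsubA : A ⊆ IntF.biUnion
        (fun w => (Finset.range (ℓ - 1)).filter (fun i => F i = w ∨ F (i + 1) = w)) := by
      intro i hi
      rw [hA, Finset.mem_filter] at hi
      obtain ⟨hir, hint⟩ := hi
      rw [Finset.mem_biUnion]
      rcases hint with hint | hint
      · exact ⟨F i, hmemIntF _ hint, Finset.mem_filter.mpr ⟨hir, Or.inl rfl⟩⟩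
      · exact ⟨F (i + 1), hmemIntF _ hint, Finset.mem_filter.mpr ⟨hir, Or.inr rfl⟩⟩
    have hfib : ∀ w, ((Finset.range (ℓ - 1)).filter
        (fun i => F i = w ∨ F (i + 1) = w)).card ≤ 2 := by
      intro w
      rw [Finset.filter_or]
      refine le_trans (Finset.card_union_le _ _) ?_
      have c1 : ((Finset.range (ℓ - 1)).filter (fun i => F i = w)).card ≤ 1 := by
        rw [Finset.card_le_one]
        intro a ha b hbq
        rw [Finset.mem_filter, Finset.mem_range] at ha hbq
        exact hFinj a b (by omega) (by omega) (ha.2.trans hbq.2.symm)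
      have c2 : ((Finset.range (ℓ - 1)).filter (fun i => F (i + 1) = w)).card ≤ 1 := by
        rw [Finset.card_le_one]
        intro a ha b hbq
        rw [Finset.mem_filter, Finset.mem_range] at ha hbq
        have := hFinj (a + 1) (b + 1) (by omega) (by omega) (ha.2.trans hbq.2.symm)
        omega
      omega
    have hIcard : IntF.card = l.length - 2 := by
      have hm1 : l.headI ∈ l.toFinset := List.mem_toFinset.mpr (headI_mem hne)
      have hm2 : l.getLastI ∈ l.toFinset.erase l.headI :=
        Finset.mem_erase.mpr ⟨fun hc => (headI_ne_getLastI hn hlen2) hc.symm,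
          List.mem_toFinset.mpr (getLastI_mem hne)⟩
      rw [hIntF, Finset.card_erase_of_mem hm2, Finset.card_erase_of_mem hm1,
        List.toFinset_card_of_nodup hn]
      omega
    have hcardA : A.card ≤ 2 * (l.length - 2) := by
      refine le_trans (Finset.card_le_card hsubA) ?_
      refine le_trans (Finset.card_biUnion_le) ?_
      calc ∑ w ∈ IntF, ((Finset.range (ℓ - 1)).filter
            (fun i => F i = w ∨ F (i + 1) = w)).card
          ≤ ∑ w ∈ IntF, 2 := Finset.sum_le_sum (fun w _ => hfib w)
        _ = IntF.card * 2 := by rw [Finset.sum_const, smul_eq_mul]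
        _ = 2 * (l.length - 2) := by rw [hIcard]; ring
    have hhg : l.headI ≠ l.getLastI := headI_ne_getLastI hn hlen2
    have hcardB : Bf.card ≤ 1 := by
      rw [Finset.card_le_one]
      intro a ha b hbq
      rw [hBf, Finset.mem_filter, Finset.mem_range] at ha hbq
      obtain ⟨ha1, ha2⟩ := ha
      obtain ⟨hb1, hb2⟩ := hbq
      rcases ha2 with ⟨ha2, ha3⟩ | ⟨ha2, ha3⟩ <;> rcases hb2 with ⟨hb2, hb3⟩ | ⟨hb2, hb3⟩
      · exact hFinj a b (by omega) (by omega) (ha2.trans hb2.symm)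
      · exfalso
        have e1 : a = b + 1 := hFinj _ _ (by omega) (by omega) (ha2.trans hb3.symm)
        have e2 : a + 1 = b := hFinj _ _ (by omega) (by omega) (ha3.trans hb2.symm)
        omega
      · exfalso
        have e1 : a = b + 1 := hFinj _ _ (by omega) (by omega) (ha2.trans hb3.symm)
        have e2 : a + 1 = b := hFinj _ _ (by omega) (by omega) (ha3.trans hb2.symm)
        omega
      · exact hFinj a b (by omega) (by omega) (ha2.trans hb2.symm)
    have hcardB' : B'.card ≤ if l.length ≤ L then 1 else 0 := by
      rw [hB']
      split
      · exact hcardB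
      · simp
    calc ((Finset.range (ℓ - 1)).filter (fun i => Good L F i (Comp.path l))).card
        ≤ (A ∪ B').card := Finset.card_le_card hsplit
      _ ≤ A.card + B'.card := Finset.card_union_le _ _
      _ ≤ gbound L (Comp.path l) := by
          rw [gbound, verts_path]
          omega
  -- summation
  have hcover : Finset.range (ℓ - 1) ⊆ S.toFinset.biUnion
      (fun c => (Finset.range (ℓ - 1)).filter (fun i => Good L F i c)) := by
    intro i hi
    rw [Finset.mem_range] at hi
    obtain ⟨c, hcS, hgood⟩ := hcharge i (by omega)
    rw [Finset.mem_biUnion]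
    exact ⟨c, List.mem_toFinset.mpr hcS, Finset.mem_filter.mpr ⟨Finset.mem_range.mpr hi, hgood⟩⟩
  have hmain : ℓ - 1 ≤ (S.map (gbound L)).sum := by
    have h1 := Finset.card_le_card hcover
    rw [Finset.card_range] at h1
    have h2 := Finset.card_biUnion_le (s := S.toFinset)
      (t := fun c => (Finset.range (ℓ - 1)).filter (fun i => Good L F i c))
    have h3 : ∑ c ∈ S.toFinset,
        ((Finset.range (ℓ - 1)).filter (fun i => Good L F i c)).card
        ≤ ∑ c ∈ S.toFinset, gbound L c :=
      Finset.sum_le_sum (fun c hc => hGbound c (List.mem_toFinset.mp hc))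
    have h4 : (∑ c ∈ S.toFinset, gbound L c) ≤ (S.map (gbound L)).sum :=
      toFinset_sum_le_list_sum S (gbound L)
    omega
  -- wrap up numerically
  have hpe1 : ∀ c ∈ S, 1 ≤ c.edges.length := by
    intro c hcS
    obtain ⟨l, rfl⟩ := hpathrep c hcS
    have hwf := hS.2.1 _ hcS
    rw [Comp.edges, length_edgesP]
    have := hwf.2
    omega
  have hgb : ∀ c ∈ S, gbound L c + 1 ≤ 2 * c.edges.length := by
    intro c hcS
    obtain ⟨l, rfl⟩ := hpathrep c hcS
    have hwf := hS.2.1 _ hcS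
    have h2l : (2:ℕ) ≤ l.length := hwf.2
    rw [Comp.edges, length_edgesP, gbound, verts_path]
    split <;> omega
  have hTm := sum_gbound_le hpe1 hgb
  -- case on the number of components
  rcases S with _ | ⟨c, S'⟩
  · rw [List.map_nil, List.sum_nil] at hmain
    omega
  · rcases S' with _ | ⟨d, S''⟩
    · obtain ⟨l, rfl⟩ := hpathrep c (by simp)
      have hwf := hS.2.1 (Comp.path l) (by simp)
      have h2l : (2:ℕ) ≤ l.length := hwf.2
      rw [List.map_cons, List.map_nil, List.sum_cons, List.sum_nil] at hmain hrsum
      simp only [Comp.edges, length_edgesP] at hrsum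
      simp only [gbound, verts_path] at hmain
      by_cases hsp : l.length ≤ L
      · erw [if_pos hsp] at hmain
        rw [hLdef] at hr hsp
        omega
      · erw [if_neg hsp] at hmain
        rw [hLdef] at hr
        omega
    · simp only [List.length_cons] at hTm
      rw [hLdef] at hr
      omega

end ORLower
namespace ORUpper
open List

/-- all edges of the complete graph on `{0, ..., N-1}` -/
def allE (N : ℕ) : List (Sym2 ℕ) :=
  (List.range N).flatMap (fun b => (List.range b).map (fun a => s(a, b)))

lemma mem_allE {N : ℕ} {e : Sym2 ℕ} :
    e ∈ allE N ↔ ∃ a b : ℕ, a < b ∧ b < N ∧ e = s(a, b) := by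
  simp only [allE, List.mem_flatMap, List.mem_map, List.mem_range]
  constructor
  · rintro ⟨b, hb, a, ha, rfl⟩
    exact ⟨a, b, ha, hb, rfl⟩
  · rintro ⟨a, b, hab, hb, rfl⟩
    exact ⟨b, hb, a, hab, rfl⟩

lemma nodup_allE (N : ℕ) : (allE N).Nodup := by
  rw [allE, List.nodup_flatMap]
  constructor
  · intro b hb
    refine List.Nodup.map_on ?_ List.nodup_range
    intro a ha a' ha' haa
    rw [List.mem_range] at ha ha'
    rw [Sym2.eq_iff] at haa
    omega
  · refine List.Pairwise.imp ?_ (List.pairwise_lt_range (n := N))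
    intro b b' hbb
    intro e he he'
    rw [List.mem_map] at he he'
    obtain ⟨a, ha, rfl⟩ := he
    obtain ⟨a', ha', hee⟩ := he'
    rw [List.mem_range] at ha ha'
    rw [Sym2.eq_iff] at hee
    omega

lemma sym2_mem_allE {N u v : ℕ} (huv : u ≠ v) (hu : u < N) (hv : v < N) :
    s(u, v) ∈ allE N := by
  rcases Nat.lt_or_ge u v with hlt | hge
  · exact mem_allE.mpr ⟨u, v, hlt, hv, rfl⟩
  · have hlt : v < u := by omega
    exact mem_allE.mpr ⟨v, u, hlt, hu, by rw [Sym2.eq_swap]⟩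

/-- the larger endpoint of an edge -/
def bigOf : Sym2 ℕ → ℕ := Sym2.lift ⟨fun a b => max a b, fun a b => max_comm a b⟩

@[simp] lemma bigOf_mk (a b : ℕ) : bigOf s(a, b) = max a b := rfl

def maxV (h : History) : ℕ := (h.map (fun p => bigOf p.1)).foldr max 0

lemma le_foldr_max : ∀ (l : List ℕ) (x : ℕ), x ∈ l → x ≤ l.foldr max 0 := by
  intro l
  induction l with
  | nil => intro x hx; simp at hx
  | cons y t ih =>
    intro x hx
    rw [List.foldr_cons]
    rcases List.mem_cons.mp hx with rfl | hx'
    · exact le_max_left _ _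
    · exact le_trans (ih x hx') (le_max_right _ _)

lemma le_maxV {h : History} {x : Sym2 ℕ × Bool} (hx : x ∈ h) : bigOf x.1 ≤ maxV h :=
  le_foldr_max _ _ (List.mem_map_of_mem hx)

/-- Builder: play any not-yet-played edge of `K_N`, else a fresh edge. -/
noncomputable def builder (N : ℕ) : BuilderStrategy := fun h =>
  if hx : ∃ e, e ∈ allE N ∧ ∀ c, (e, c) ∉ h then hx.choose
  else s(maxV h + 1, maxV h + 2)

lemma builder_valid (N : ℕ) : ValidStrategy (builder N) := by
  intro h
  rw [builder]
  split
  · next hx =>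
    obtain ⟨hmem, hfresh⟩ := hx.choose_spec
    refine ⟨?_, hfresh⟩
    obtain ⟨a, b, hab, _, he⟩ := mem_allE.mp hmem
    rw [he, Sym2.mk_isDiag_iff]
    omega
  · next hx =>
    constructor
    · rw [Sym2.mk_isDiag_iff]; omega
    · intro c hc
      have := le_maxV hc
      simp only [bigOf_mk] at this
      omega

variable {N : ℕ} {P : PainterStrategy}

lemma play_props : ∀ n, n ≤ (allE N).length →
    ((play (builder N) P n).map Prod.fst).Nodup ∧
      ∀ e ∈ (play (builder N) P n).map Prod.fst, e ∈ allE N := by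
  intro n
  induction n with
  | zero => intro _; simp [play, playFrom]
  | succ n ih =>
    intro hn
    obtain ⟨hnd, hsub⟩ := ih (by omega)
    set h := play (builder N) P n with hh
    have hlen : h.length = n := ORLower.play_length _ _ n
    have hcond : ∃ e, e ∈ allE N ∧ ∀ c, (e, c) ∉ h := by
      by_contra hcon
      push_neg at hcon
      -- every edge of allE N appears in h, impossible since h too short
      have hEsub : (allE N).toFinset ⊆ (h.map Prod.fst).toFinset := by
        intro e he
        rw [List.mem_toFinset] at he ⊢
        obtain ⟨c, hc⟩ := hcon e he
        exact List.mem_map.mpr ⟨(e, c), hc, rfl⟩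
      have h1 := Finset.card_le_card hEsub
      rw [List.toFinset_card_of_nodup (nodup_allE N)] at h1
      have h2 := List.toFinset_card_le (h.map Prod.fst)
      rw [List.length_map, hlen] at h2
      omega
    have hBh : builder N h ∈ allE N ∧ ∀ c, (builder N h, c) ∉ h := by
      rw [builder, dif_pos hcond]
      exact hcond.choose_spec
    rw [ORLower.play_succ]
    rw [← hh]
    constructor
    · rw [List.map_cons, List.nodup_cons]
      refine ⟨?_, hnd⟩
      intro hmem
      obtain ⟨⟨e', c'⟩, hx, hx2⟩ := List.mem_map.mp hmem
      exact hBh.2 c' (by rwa [show e' = builder N h from hx2] at hx)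
    · intro e he
      rw [List.map_cons] at he
      rcases List.mem_cons.mp he with rfl | he
      · exact hBh.1
      · exact hsub e he

lemma all_played : ∀ e ∈ allE N, ∃ c, (e, c) ∈ play (builder N) P ((allE N).length) := by
  intro e he
  obtain ⟨hnd, hsub⟩ := play_props (N := N) (P := P) ((allE N).length) le_rfl
  set h := play (builder N) P ((allE N).length) with hh
  have hlen : h.length = (allE N).length := ORLower.play_length _ _ _
  have hfeq : (h.map Prod.fst).toFinset = (allE N).toFinset := by
    apply Finset.eq_of_subset_of_card_le
    · intro x hx
      rw [List.mem_toFinset] at hx ⊢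
      exact hsub x hx
    · rw [List.toFinset_card_of_nodup (nodup_allE N),
        List.toFinset_card_of_nodup hnd, List.length_map, hlen]
  have : e ∈ h.map Prod.fst := by
    rw [← List.mem_toFinset, hfeq, List.mem_toFinset]
    exact he
  obtain ⟨⟨e', c⟩, hx, hx2⟩ := List.mem_map.mp this
  exact ⟨c, by rwa [show e' = e from hx2] at hx⟩

end ORUpper
namespace ORUpper
open List

lemma builder_wins {ℓ : ℕ} (hℓ : 2 ≤ ℓ) :
    BuilderWins K13 (pathGraph ℓ) ((allE (ℓ + 2)).length) := by
  classical
  set N := ℓ + 2 with hN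
  refine ⟨builder N, builder_valid N, ?_⟩
  intro P
  set H := play (builder N) P ((allE N).length) with hH
  have hplayed : ∀ u v : ℕ, u ≠ v → u < N → v < N →
      (s(u, v), true) ∈ H ∨ (s(u, v), false) ∈ H := by
    intro u v hne hu hv
    obtain ⟨c, hc⟩ := all_played _ (sym2_mem_allE hne hu hv)
    cases c
    · exact Or.inr hc
    · exact Or.inl hc
  by_cases hred : ∃ w x y z : ℕ, w < N ∧
      x ≠ y ∧ x ≠ z ∧ y ≠ z ∧ x ≠ w ∧ y ≠ w ∧ z ≠ w ∧
      (s(w, x), true) ∈ H ∧ (s(w, y), true) ∈ H ∧ (s(w, z), true) ∈ H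
  · left
    obtain ⟨w, x, y, z, hw, hxy, hxz, hyz, hxw, hyw, hzw, h1, h2, h3⟩ := hred
    refine ⟨Sum.elim (fun _ => w) ![x, y, z], ?_, ?_⟩
    · rintro (a | a) (b | b) hab
      · rw [Subsingleton.elim a b]
      · exfalso
        simp only [Sum.elim_inl, Sum.elim_inr] at hab
        fin_cases b <;> simp_all
      · exfalso
        simp only [Sum.elim_inl, Sum.elim_inr] at hab
        fin_cases a <;> simp_all
      · simp only [Sum.elim_inr] at hab
        congr 1
        fin_cases a <;> fin_cases b <;> simp_all
    · rintro (a | a) (b | b) hadj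
      · exfalso; revert hadj; simp [completeBipartiteGraph]
      · simp only [Sum.elim_inl, Sum.elim_inr]
        refine histGraph_adj.mpr ⟨?_, ?_⟩ <;> fin_cases b
        · exact Ne.symm hxw
        · exact Ne.symm hyw
        · exact Ne.symm hzw
        · exact h1
        · exact h2
        · exact h3
      · simp only [Sum.elim_inl, Sum.elim_inr]
        refine histGraph_adj.mpr ⟨?_, ?_⟩ <;> fin_cases a
        · exact hxw
        · exact hyw
        · exact hzw
        · rw [Sym2.eq_swap]; exact h1
        · rw [Sym2.eq_swap]; exact h2
        · rw [Sym2.eq_swap]; exact h3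
      · exfalso; revert hadj; simp [completeBipartiteGraph]
  · right
    have hblue_deg : ∀ w, w < N → ℓ - 1 ≤ ((Finset.range N).filter
        (fun x => x ≠ w ∧ (s(w, x), false) ∈ H)).card := by
      intro w hw
      set RN := (Finset.range N).filter (fun x => x ≠ w ∧ (s(w, x), true) ∈ H) with hRN
      have hRNcard : RN.card ≤ 2 := by
        by_contra hcon
        push_neg at hcon
        obtain ⟨x, y, z, hxm, hym, hzm, hxy, hxz, hyz⟩ := Finset.two_lt_card_iff.mp hcon
        rw [hRN, Finset.mem_filter, Finset.mem_range] at hxm hym hzm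
        exact hred ⟨w, x, y, z, hw, hxy, hxz, hyz, hxm.2.1, hym.2.1, hzm.2.1,
          hxm.2.2, hym.2.2, hzm.2.2⟩
      have hpart := Finset.card_filter_add_card_filter_not
        (s := Finset.range N) (p := fun x => x ≠ w ∧ (s(w, x), false) ∈ H)
      have hsub : (Finset.range N).filter (fun x => ¬(x ≠ w ∧ (s(w, x), false) ∈ H))
          ⊆ insert w RN := by
        intro x hx
        rw [Finset.mem_filter] at hx
        by_cases hxw : x = w
        · subst hxw; exact Finset.mem_insert_self _ _
        · apply Finset.mem_insert_of_mem
          rw [hRN, Finset.mem_filter]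
          refine ⟨hx.1, hxw, ?_⟩
          rcases hplayed w x (Ne.symm hxw) hw (Finset.mem_range.mp hx.1) with h | h
          · exact h
          · exact absurd ⟨hxw, h⟩ hx.2
      have hc1 := Finset.card_le_card hsub
      have hc2 := Finset.card_insert_le w RN
      rw [Finset.card_range] at hpart
      omega
    have hchain : ∀ k, 1 ≤ k → k ≤ ℓ → ∃ l : List ℕ, l.length = k ∧ l.Nodup ∧
        (∀ x ∈ l, x < N) ∧ l.Chain' (fun a b => (s(a, b), false) ∈ H ∧ a ≠ b) := by
      intro k
      induction k with
      | zero => omega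
      | succ k ih =>
        intro _ hk1
        by_cases hk0 : k = 0
        · subst hk0
          refine ⟨[0], rfl, by simp, ?_, by simp [List.Chain']⟩
          intro x hx
          rw [List.mem_singleton] at hx
          subst hx; omega
        · obtain ⟨l, hlen, hnd, hlt, hch⟩ := ih (by omega) (by omega)
          have hlne : l ≠ [] := by intro hc; subst hc; simp at hlen; omega
          set y := l.getLast hlne with hy
          have hylt : y < N := hlt _ (List.getLast_mem hlne)
          have hcard := hblue_deg y hylt
          have hex : ∃ x ∈ (Finset.range N).filter
              (fun x => x ≠ y ∧ (s(y, x), false) ∈ H), x ∉ l := by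
            by_contra hcon
            push_neg at hcon
            have hsub2 : (Finset.range N).filter (fun x => x ≠ y ∧ (s(y, x), false) ∈ H)
                ⊆ l.toFinset.erase y := by
              intro x hx
              rw [Finset.mem_erase]
              have hxl := hcon x hx
              rw [Finset.mem_filter] at hx
              exact ⟨hx.2.1, List.mem_toFinset.mpr hxl⟩
            have hc1 := Finset.card_le_card hsub2
            have hc2 : (l.toFinset.erase y).card = k - 1 := by
              rw [Finset.card_erase_of_mem (List.mem_toFinset.mpr (List.getLast_mem hlne)),
                List.toFinset_card_of_nodup hnd, hlen]
            omega
          obtain ⟨x, hxmem, hxl⟩ := hex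
          rw [Finset.mem_filter, Finset.mem_range] at hxmem
          refine ⟨l ++ [x], by simp [hlen], ?_, ?_, ?_⟩
          · rw [List.nodup_append]
            refine ⟨hnd, by simp, ?_⟩
            intro a ha b hb hab
            rw [List.mem_singleton] at hb
            subst hb
            subst hab
            exact hxl ha
          · intro a ha
            rcases List.mem_append.mp ha with ha | ha
            · exact hlt a ha
            · rw [List.mem_singleton] at ha; subst ha; exact hxmem.1
          · rw [List.Chain', List.isChain_append]
            refine ⟨hch, by simp, ?_⟩
            intro a ha b hb
            rw [List.getLast?_eq_getLast hlne] at ha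
            have ha' : a = y := by
              have h' : l.getLast hlne = a := by simpa using ha
              rw [hy, h']
            have hb' : b = x := by
              have h' : x = b := by simpa using hb
              rw [h']
            subst ha'; subst hb'
            exact ⟨hxmem.2.2, hxmem.2.1.symm⟩
    obtain ⟨l, hlen, hnd, hlt, hch⟩ := hchain ℓ (by omega) le_rfl
    have key : ∀ i j : ℕ, ∀ (hi : i < l.length) (hj : j < l.length), j = i + 1 →
        (histGraph H false).Adj (l[i]'hi) (l[j]'hj) := by
      intro i j hi hj hij
      subst hij
      have hg := List.isChain_iff_getElem.mp hch i (by omega)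
      exact histGraph_adj.mpr ⟨hg.2, hg.1⟩
    refine ⟨fun i => l[(i : ℕ)]'(by rw [hlen]; exact i.isLt), ?_, ?_⟩
    · intro a b hab
      have := hnd.getElem_inj_iff.mp hab
      exact Fin.ext this
    · intro a b hadj
      rw [SimpleGraph.pathGraph_adj] at hadj
      rcases hadj with hab | hab
      · exact key a.val b.val _ _ hab.symm
      · exact (key b.val a.val _ _ hab.symm).symm

end ORUpper
/-- Lower bound: `r̃(K_{1,3}, P_ℓ) ≥ ⌊3ℓ/2⌋`; moreover Painter has a strategy that
prevents both a red `K_{1,3}` and a blue path on `ℓ` vertices during the first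
`⌊3ℓ/2⌋ - 1` rounds, against any valid Builder strategy. -/
theorem onlineRamsey_K13_path_lower (ℓ : ℕ) (hℓ : 2 ≤ ℓ) :
    3 * ℓ / 2 ≤ onlineRamsey K13 (pathGraph ℓ) ∧
    ∃ P : PainterStrategy, ∀ B : BuilderStrategy, ValidStrategy B →
      ∀ k ≤ 3 * ℓ / 2 - 1,
        ¬ HasCopy K13 (histGraph (play B P k) true) ∧
        ¬ HasCopy (pathGraph ℓ) (histGraph (play B P k) false) := by
  have hP2 : ∀ B : BuilderStrategy, ValidStrategy B → ∀ k ≤ 3 * ℓ / 2 - 1,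
      ¬ HasCopy K13 (histGraph (play B (ORLower.painter (ℓ / 2)) k) true) ∧
      ¬ HasCopy (pathGraph ℓ) (histGraph (play B (ORLower.painter (ℓ / 2)) k) false) := by
    intro B hB k hk
    exact ⟨ORLower.no_red_K13 hB k, ORLower.no_blue_path hℓ hB hk⟩
  constructor
  · have hne : {n | BuilderWins K13 (pathGraph ℓ) n}.Nonempty :=
      ⟨_, ORUpper.builder_wins hℓ⟩
    have hmem := Nat.sInf_mem hne
    rw [onlineRamsey]
    set n0 := sInf {n | BuilderWins K13 (pathGraph ℓ) n} with hn0
    by_contra hcon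
    push_neg at hcon
    obtain ⟨B, hBvalid, hBwin⟩ := hmem
    rcases hBwin (ORLower.painter (ℓ / 2)) with hcopy | hcopy
    · exact (hP2 B hBvalid n0 (by omega)).1 hcopy
    · exact (hP2 B hBvalid n0 (by omega)).2 hcopy
  · exact ⟨ORLower.painter (ℓ / 2), hP2⟩
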